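/- arXiv:math/9903123 — 5 statements merged into one kernel-verified Lean document; each statement's English description precedes it below -/
import Mathlib

section
/- Let Δ₁ be a subsystem of the real roots of an affine root system (i.e., a subset of Δ_re closed under the reflections s_α for α ∈ Δ₁). Then the following conditions are equivalent: (i) Δ₁ is finite; (ii) the Weyl group W₁ generated by {s_α : α ∈ Δ₁} is finite; (iii) the null root δ is not in the ℂ-span of Δ₁; (iv) δ is not in the ℚ-span of Δ₁. -/
open scoped BigOperators

/-- Abstract data of (the root system of) an affine Lie algebra, living in the
complex dual Cartan `V = 𝔥*`.  `ι` indexes the simple roots. -/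
structure AffineRootSystem (ι V : Type*) [Fintype ι] [AddCommGroup V] [Module ℂ V] where
  /-- the normalized invariant symmetric bilinear form `( , )` on `𝔥*` -/
  B : V →ₗ[ℂ] V →ₗ[ℂ] ℂ
  symm : ∀ x y, B x y = B y x
  /-- the simple roots `α_i` -/
  simple : ι → V
  /-- the set of all roots `Δ` -/
  Δ : Set V
  /-- the set of real roots `Δ_re` -/
  Δre : Set V
  /-- the set of positive roots `Δ⁺` -/
  pos : Set V
  /-- the basic positive imaginary root `δ` -/
  δ : V
  /-- a fixed `ρ` with `(α_i∨, ρ) = 1` -/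
  ρ : V
  /-- the integral weight lattice `P` -/
  P : AddSubgroup V
  /-- the reflection `s_α` (as a linear automorphism of `𝔥*`) -/
  reflEquiv : V → (V ≃ₗ[ℂ] V)
  Δre_sub : Δre ⊆ Δ
  pos_sub : pos ⊆ Δ
  simple_mem : ∀ i, simple i ∈ Δre
  simple_pos : ∀ i, simple i ∈ pos
  δ_ne : δ ≠ 0
  δ_pos : δ ∈ pos
  B_δ_δ : B δ δ = 0
  B_δ_re : ∀ α ∈ Δre, B δ α = 0
  norm_rat_pos : ∀ α ∈ Δre, ∃ q : ℚ, 0 < q ∧ B α α = (q : ℂ)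
  pairing_rat : ∀ α ∈ Δre, ∀ β ∈ Δre, ∃ q : ℚ, B α β = (q : ℂ)
  reflEquiv_apply : ∀ α ∈ Δre, ∀ v, reflEquiv α v = v - (B ((2 / B α α) • α) v) • α
  refl_closed : ∀ α ∈ Δre, ∀ β ∈ Δre, reflEquiv α β ∈ Δre
  neg_mem : ∀ α ∈ Δre, -α ∈ Δre
  pos_or_neg : ∀ α ∈ Δre, α ∈ pos ∨ -α ∈ pos
  not_both : ∀ α ∈ Δre, ¬(α ∈ pos ∧ -α ∈ pos)
  ρ_normalized : ∀ i, B ((2 / B (simple i) (simple i)) • simple i) ρ = 1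
  simple_mem_P : ∀ i, simple i ∈ P
  ρ_mem_P : ρ ∈ P
  Δre_sub_P : Δre ⊆ (P : Set V)
  /-- each real root belongs to a `δ`-string of real roots -/
  string : ∀ α ∈ Δre, ∃ r : ℤ, 0 < r ∧ ∀ n : ℤ, α + (n * r) • δ ∈ Δre
  /-- finitely many classes of real roots modulo `ℤδ` (finiteness of `Δ_cl`) -/
  cl_finite : ∃ F : Finset V, ∀ α ∈ Δre, ∃ γ ∈ F, ∃ n : ℤ, α = γ + n • δ
  /-- the form is positive semidefinite on the rational span of the real roots,
  with radical spanned by `δ` -/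
  semidef : ∀ (t : Finset V) (c : V → ℚ), (↑t : Set V) ⊆ Δre →
    ∃ q : ℚ, 0 ≤ q ∧
      B (∑ α ∈ t, (c α : ℂ) • α) (∑ α ∈ t, (c α : ℂ) • α) = (q : ℂ) ∧
      (q = 0 → ∃ s : ℚ, ∑ α ∈ t, (c α : ℂ) • α = (s : ℂ) • δ)

namespace AffineRootSystem

variable {ι V : Type*} [Fintype ι] [AddCommGroup V] [Module ℂ V]
variable (A : AffineRootSystem ι V)

/-- the coroot `α∨ = 2α/(α,α)` -/
noncomputable def coroot (α : V) : V := (2 / A.B α α) • α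

/-- the pairing `(α∨, v)` -/
noncomputable def pair (α v : V) : ℂ := A.B (A.coroot α) v

/-- the reflection `s_α` as a map -/
noncomputable def refl (α v : V) : V := A.reflEquiv α v

/-- a subsystem of `Δ_re`: a subset closed under its own reflections -/
def IsSubsystem (Δ₁ : Set V) : Prop :=
  Δ₁ ⊆ A.Δre ∧ ∀ α ∈ Δ₁, ∀ β ∈ Δ₁, A.refl α β ∈ Δ₁

/-- the group generated by the reflections in a set of roots -/
noncomputable def weylOf (s : Set V) : Subgroup (V ≃ₗ[ℂ] V) :=
  Subgroup.closure (A.reflEquiv '' s)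

/-- the Weyl group `W` -/
noncomputable def W : Subgroup (V ≃ₗ[ℂ] V) := A.weylOf A.Δre

/-- the shifted (dot) action `w ∘ λ = w(λ+ρ) - ρ` -/
noncomputable def dot (w : V ≃ₗ[ℂ] V) (lam : V) : V := w (lam + A.ρ) - A.ρ

/-- membership in the `ℚ`-span of a subset of `V` -/
def memRatSpan (s : Set V) (v : V) : Prop :=
  ∃ (t : Finset V) (c : V → ℚ), (↑t : Set V) ⊆ s ∧ v = ∑ α ∈ t, (c α : ℂ) • α

/-- membership in the `ℚ_{≥0}`-cone spanned by a subset of `V` -/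
def memRatSpanNonneg (s : Set V) (v : V) : Prop :=
  ∃ (t : Finset V) (c : V → ℚ), (↑t : Set V) ⊆ s ∧ (∀ α ∈ t, 0 ≤ c α) ∧
    v = ∑ α ∈ t, (c α : ℂ) • α

/-- the positive part `Δ₁⁺ = Δ₁ ∩ Δ⁺` of a subsystem -/
def posPart (Δ₁ : Set V) : Set V := Δ₁ ∩ A.pos

/-- the set `Π₁` of simple roots of a subsystem:
`Π₁ = {α ∈ Δ₁⁺ ; s_α(Δ₁⁺ \ {α}) ⊆ Δ₁⁺}` -/
noncomputable def simpleOf (Δ₁ : Set V) : Set V :=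
  {α ∈ A.posPart Δ₁ | ∀ β ∈ A.posPart Δ₁ \ {α}, A.refl α β ∈ A.posPart Δ₁}

/-- the integral root system `Δ(λ) = {α ∈ Δ_re ; (α∨, λ+ρ) ∈ ℤ}` -/
noncomputable def Δint (lam : V) : Set V :=
  {α ∈ A.Δre | ∃ n : ℤ, A.pair α (lam + A.ρ) = (n : ℂ)}

/-- `Δ⁺(λ)` -/
noncomputable def ΔintPos (lam : V) : Set V := A.Δint lam ∩ A.pos

/-- `Δ⁻(λ)` -/
noncomputable def ΔintNeg (lam : V) : Set V := {α ∈ A.Δint lam | -α ∈ A.pos}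

/-- `Δ₀(λ) = {α ∈ Δ_re ; (α∨, λ+ρ) = 0}` -/
noncomputable def Δ0 (lam : V) : Set V := {α ∈ A.Δre | A.pair α (lam + A.ρ) = 0}

/-- `Δ₀⁺(λ)` -/
noncomputable def Δ0Pos (lam : V) : Set V := A.Δ0 lam ∩ A.pos

/-- the integral Weyl group `W(λ)` -/
noncomputable def Wint (lam : V) : Subgroup (V ≃ₗ[ℂ] V) := A.weylOf (A.Δint lam)

/-- the subgroup `W₀(λ)` -/
noncomputable def W0 (lam : V) : Subgroup (V ≃ₗ[ℂ] V) := A.weylOf (A.Δ0 lam)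

/-- the dot-orbit of `λ` under `W(λ)` -/
noncomputable def orbit (lam : V) : Set V := {μ | ∃ w ∈ A.Wint lam, μ = A.dot w lam}

/-- `𝒞 = {λ ; (δ, λ+ρ) ≠ 0}` -/
noncomputable def CC : Set V := {lam | A.B A.δ (lam + A.ρ) ≠ 0}

/-- `(α∨, λ+ρ)` is a nonnegative real number -/
noncomputable def nonnegAt (lam α : V) : Prop :=
  ∃ r : ℝ, 0 ≤ r ∧ A.pair α (lam + A.ρ) = (r : ℂ)

/-- `(α∨, λ+ρ)` is a nonpositive real number -/
noncomputable def nonposAt (lam α : V) : Prop :=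
  ∃ r : ℝ, r ≤ 0 ∧ A.pair α (lam + A.ρ) = (r : ℂ)

/-- `𝔥*⁺ = {λ ; (α∨,λ+ρ) ≥ 0 for all α ∈ Δ⁺(λ)}` -/
noncomputable def domP : Set V := {lam | ∀ α ∈ A.ΔintPos lam, A.nonnegAt lam α}

/-- `𝔥*⁻` -/
noncomputable def domM : Set V := {lam | ∀ α ∈ A.ΔintPos lam, A.nonposAt lam α}

/-- `𝒞⁺` -/
noncomputable def CCp : Set V := A.CC ∩ A.domP

/-- `𝒞⁻` -/
noncomputable def CCm : Set V := A.CC ∩ A.domM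

/-- `Δ_J = Δ ∩ Σ_{i ∈ J} ℤ α_i` -/
noncomputable def ΔJ (J : Set ι) : Set V :=
  {α ∈ A.Δ | ∃ c : ι → ℤ, (∀ i, i ∉ J → c i = 0) ∧ α = ∑ i, (c i : ℂ) • A.simple i}

/-- the dominant integral weights `P⁺` -/
noncomputable def Pplus : Set V :=
  {v | v ∈ A.P ∧ ∀ i, ∃ n : ℤ, 0 ≤ n ∧ A.pair (A.simple i) v = (n : ℂ)}

/-- the rational points `𝔥*_ℚ = ℚ ⊗_ℤ P` -/
noncomputable def ratPoints : Set V :=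
  {v | ∃ (t : Finset V) (c : V → ℚ), (↑t : Set V) ⊆ (A.P : Set V) ∧
    v = ∑ α ∈ t, (c α : ℂ) • α}

end AffineRootSystem


namespace AffineRootSystem

section Aux

variable {ι V : Type*} [Fintype ι] [AddCommGroup V] [Module ℂ V]
variable (A : AffineRootSystem ι V) {Δ₁ : Set V}

lemma B_re_δ {α : V} (hα : α ∈ A.Δre) : A.B α A.δ = 0 := by
  rw [A.symm]; exact A.B_δ_re α hα

lemma B_norm_ne {γ : V} (hγ : γ ∈ A.Δre) : A.B γ γ ≠ 0 := by
  obtain ⟨q, hq, he⟩ := A.norm_rat_pos γ hγ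
  rw [he]
  exact_mod_cast hq.ne'

lemma refl_apply' {γ : V} (hγ : γ ∈ A.Δre) (v : V) :
    A.reflEquiv γ v = v - ((2 / A.B γ γ) * A.B γ v) • γ := by
  rw [A.reflEquiv_apply γ hγ v, map_smul]; rfl

lemma refl_self {γ : V} (hγ : γ ∈ A.Δre) : A.reflEquiv γ γ = -γ := by
  rw [A.refl_apply' hγ]
  have h : (2 / A.B γ γ) * A.B γ γ = 2 := div_mul_cancel₀ 2 (A.B_norm_ne hγ)
  rw [h, two_smul]; abel

lemma refl_δ {γ : V} (hγ : γ ∈ A.Δre) : A.reflEquiv γ A.δ = A.δ := by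
  rw [A.refl_apply' hγ, A.B_re_δ hγ, mul_zero, zero_smul, sub_zero]

lemma refl_invol {γ : V} (hγ : γ ∈ A.Δre) (v : V) :
    A.reflEquiv γ (A.reflEquiv γ v) = v := by
  have hB : A.B γ (v - ((2 / A.B γ γ) * A.B γ v) • γ) = - A.B γ v := by
    rw [map_sub, map_smul, smul_eq_mul]
    field_simp [A.B_norm_ne hγ]
    ring
  rw [A.refl_apply' hγ v, A.refl_apply' hγ, hB, mul_neg, neg_smul, sub_neg_eq_add,
    sub_add_cancel]

lemma refl_symm {γ : V} (hγ : γ ∈ A.Δre) (v : V) :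
    (A.reflEquiv γ).symm v = A.reflEquiv γ v := by
  apply (A.reflEquiv γ).injective
  rw [LinearEquiv.apply_symm_apply, A.refl_invol hγ]

lemma refl_B {γ : V} (hγ : γ ∈ A.Δre) (u v : V) :
    A.B (A.reflEquiv γ u) (A.reflEquiv γ v) = A.B u v := by
  rw [A.refl_apply' hγ u, A.refl_apply' hγ v]
  simp only [map_sub, map_smul, LinearMap.sub_apply, LinearMap.smul_apply, smul_eq_mul]
  rw [A.symm u γ]
  field_simp [A.B_norm_ne hγ]
  ring

lemma memW_props (h : A.IsSubsystem Δ₁) {w : V ≃ₗ[ℂ] V} (hw : w ∈ A.weylOf Δ₁) :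
    (∀ α ∈ Δ₁, w α ∈ Δ₁) ∧ (∀ α ∈ Δ₁, w.symm α ∈ Δ₁) ∧ w A.δ = A.δ ∧
      ∀ u v, A.B (w u) (w v) = A.B u v := by
  induction hw using Subgroup.closure_induction with
  | mem x hx =>
    obtain ⟨γ, hγ, rfl⟩ := hx
    have hre : γ ∈ A.Δre := h.1 hγ
    refine ⟨fun α hα => h.2 γ hγ α hα, fun α hα => ?_, A.refl_δ hre, A.refl_B hre⟩
    rw [A.refl_symm hre]
    exact h.2 γ hγ α hα
  | one =>
    exact ⟨fun α hα => hα, fun α hα => hα, rfl, fun u v => rfl⟩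
  | mul x y hx hy px py =>
    refine ⟨fun α hα => px.1 _ (py.1 α hα), fun α hα => py.2.1 _ (px.2.1 α hα), ?_, ?_⟩
    · show x (y A.δ) = A.δ
      rw [py.2.2.1, px.2.2.1]
    · intro u v
      show A.B (x (y u)) (x (y v)) = A.B u v
      rw [px.2.2.2, py.2.2.2]
  | inv x hx px =>
    refine ⟨fun α hα => px.2.1 α hα, fun α hα => px.1 α hα, ?_, ?_⟩
    · show x.symm A.δ = A.δ
      apply x.injective
      rw [LinearEquiv.apply_symm_apply, px.2.2.1]
    · intro u v
      show A.B (x.symm u) (x.symm v) = A.B u v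
      conv_rhs => rw [← x.apply_symm_apply u, ← x.apply_symm_apply v, px.2.2.2]

open Finset in
lemma finite_not_mem_span (h : A.IsSubsystem Δ₁) (hfin : Δ₁.Finite) :
    A.δ ∉ Submodule.span ℂ Δ₁ := by
  classical
  intro hs
  obtain ⟨c, hsupp, hsum⟩ := Submodule.mem_span_set.1 hs
  obtain ⟨p, hp⟩ := Submodule.exists_isCompl (Submodule.span ℂ {A.δ})
  set e := LinearEquiv.toSpanNonzeroSingleton ℂ V A.δ A.δ_ne with he
  set θ : V →ₗ[ℂ] ℂ :=
    (e.symm : (Submodule.span ℂ {A.δ}) →ₗ[ℂ] ℂ) ∘ₗ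
      ((Submodule.span ℂ {A.δ}).linearProjOfIsCompl p hp) with hθ
  have hθδ : θ A.δ = 1 := by
    have h1 : ((Submodule.span ℂ {A.δ}).linearProjOfIsCompl p hp) A.δ
        = ⟨A.δ, Submodule.mem_span_singleton_self _⟩ :=
      Submodule.linearProjOfIsCompl_apply_left hp ⟨A.δ, Submodule.mem_span_singleton_self _⟩
    rw [hθ]
    simp only [LinearMap.comp_apply, LinearEquiv.coe_coe]
    rw [h1, LinearEquiv.symm_apply_eq, LinearEquiv.toSpanNonzeroSingleton_one]
  haveI : Finite ↥Δ₁ := hfin.to_subtype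
  set W₁ := A.weylOf Δ₁ with hW
  set K : Set (↥Δ₁ → ↥Δ₁) :=
    {g | ∃ w, w ∈ W₁ ∧ ∀ a : ↥Δ₁, (g a : V) = w (a : V)} with hK
  have hKfin : K.Finite := Set.toFinite K
  set F := hKfin.toFinset with hF
  let wsel : (↥Δ₁ → ↥Δ₁) → (V ≃ₗ[ℂ] V) := fun g =>
    if hg : g ∈ K then hg.choose else 1
  have hwselW : ∀ g ∈ K, wsel g ∈ W₁ := by
    intro g hg
    simp only [wsel, dif_pos hg]
    exact hg.choose_spec.1
  have hwsel : ∀ g, ∀ hg : g ∈ K, ∀ a : ↥Δ₁, (g a : V) = wsel g (a : V) := by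
    intro g hg a
    simp only [wsel, dif_pos hg]
    exact hg.choose_spec.2 a
  set Ψ : V →ₗ[ℂ] ℂ := ∑ g ∈ F, θ ∘ₗ ((wsel g : V →ₗ[ℂ] V)) with hΨ
  have hΨapp : ∀ v, Ψ v = ∑ g ∈ F, θ (wsel g v) := by
    intro v
    rw [hΨ, LinearMap.sum_apply]
    exact Finset.sum_congr rfl fun g hg => rfl
  -- (a) value at δ
  have hΨδ : Ψ A.δ = (F.card : ℂ) := by
    rw [hΨapp]
    rw [Finset.sum_congr rfl fun g hg => by
      rw [(A.memW_props h (hwselW g ((Set.Finite.mem_toFinset _).1 hg))).2.2.1, hθδ]]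
    simp
  -- (b) F nonempty
  have hne : F.Nonempty := by
    refine ⟨id, (Set.Finite.mem_toFinset _).2 ⟨1, W₁.one_mem, fun a => rfl⟩⟩
  -- (c) invariance
  have hinv : ∀ u ∈ W₁, ∀ α ∈ Δ₁, Ψ (u α) = Ψ α := by
    intro u hu α hα
    have pu := A.memW_props h hu
    have memi : ∀ g, g ∈ K → ∀ a : ↥Δ₁, wsel g (u (a : V)) ∈ Δ₁ := fun g hg a =>
      (A.memW_props h (hwselW g hg)).1 _ (pu.1 _ a.2)
    have memj : ∀ g, g ∈ K → ∀ a : ↥Δ₁, wsel g (u.symm (a : V)) ∈ Δ₁ := fun g hg a =>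
      (A.memW_props h (hwselW g hg)).1 _ (pu.2.1 _ a.2)
    set i : (↥Δ₁ → ↥Δ₁) → (↥Δ₁ → ↥Δ₁) := fun g a =>
      if hg : g ∈ K then ⟨wsel g (u (a : V)), memi g hg a⟩ else a with hi
    set j : (↥Δ₁ → ↥Δ₁) → (↥Δ₁ → ↥Δ₁) := fun g a =>
      if hg : g ∈ K then ⟨wsel g (u.symm (a : V)), memj g hg a⟩ else a with hj
    have hiK : ∀ g, g ∈ K → i g ∈ K := by
      intro g hg
      refine ⟨wsel g * u, W₁.mul_mem (hwselW g hg) hu, fun a => ?_⟩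
      simp only [hi, dif_pos hg]
      rfl
    have hjK : ∀ g, g ∈ K → j g ∈ K := by
      intro g hg
      refine ⟨wsel g * u⁻¹, W₁.mul_mem (hwselW g hg) (W₁.inv_mem hu), fun a => ?_⟩
      simp only [hj, dif_pos hg]
      rfl
    rw [hΨapp, hΨapp]
    refine Finset.sum_nbij' i j (fun g hg => (Set.Finite.mem_toFinset _).2
        (hiK g ((Set.Finite.mem_toFinset _).1 hg)))
      (fun g hg => (Set.Finite.mem_toFinset _).2 (hjK g ((Set.Finite.mem_toFinset _).1 hg)))
      (fun g hg => ?_) (fun g hg => ?_) (fun g hg => ?_)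
    · have hgK : g ∈ K := (Set.Finite.mem_toFinset _).1 hg
      have higK := hiK g hgK
      funext a
      have hb : u.symm (a : V) ∈ Δ₁ := pu.2.1 _ a.2
      have e1 : j (i g) a = ⟨wsel (i g) (u.symm (a : V)), memj (i g) higK a⟩ := by
        simp only [hj]
        rw [dif_pos higK]
      rw [e1]
      apply Subtype.ext
      have h2 : wsel (i g) (u.symm (a : V)) = ((i g ⟨u.symm (a : V), hb⟩ : ↥Δ₁) : V) :=
        (hwsel (i g) higK ⟨u.symm (a : V), hb⟩).symm
      have h3 : ((i g ⟨u.symm (a : V), hb⟩ : ↥Δ₁) : V) = wsel g (u (u.symm (a : V))) := by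
        simp only [hi]
        rw [dif_pos hgK]
      show wsel (i g) (u.symm (a : V)) = (g a : V)
      rw [h2, h3, u.apply_symm_apply]
      exact (hwsel g hgK a).symm
    · have hgK : g ∈ K := (Set.Finite.mem_toFinset _).1 hg
      have hjgK := hjK g hgK
      funext a
      have hb : u (a : V) ∈ Δ₁ := pu.1 _ a.2
      have e1 : i (j g) a = ⟨wsel (j g) (u (a : V)), memi (j g) hjgK a⟩ := by
        simp only [hi]
        rw [dif_pos hjgK]
      rw [e1]
      apply Subtype.ext
      have h2 : wsel (j g) (u (a : V)) = ((j g ⟨u (a : V), hb⟩ : ↥Δ₁) : V) :=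
        (hwsel (j g) hjgK ⟨u (a : V), hb⟩).symm
      have h3 : ((j g ⟨u (a : V), hb⟩ : ↥Δ₁) : V) = wsel g (u.symm (u (a : V))) := by
        simp only [hj]
        rw [dif_pos hgK]
      show wsel (j g) (u (a : V)) = (g a : V)
      rw [h2, h3, u.symm_apply_apply]
      exact (hwsel g hgK a).symm
    · have hgK : g ∈ K := (Set.Finite.mem_toFinset _).1 hg
      have higK := hiK g hgK
      have h2 : wsel (i g) α = ((i g ⟨α, hα⟩ : ↥Δ₁) : V) :=
        (hwsel (i g) higK ⟨α, hα⟩).symm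
      have h3 : ((i g ⟨α, hα⟩ : ↥Δ₁) : V) = wsel g (u α) := by
        simp only [hi]
        rw [dif_pos hgK]
      rw [h2, h3]
  -- (e) Ψ vanishes on Δ₁
  have hzero : ∀ α ∈ Δ₁, Ψ α = 0 := by
    intro α hα
    have hαre := h.1 hα
    have h1 : Ψ (A.reflEquiv α α) = Ψ α :=
      hinv _ (Subgroup.subset_closure ⟨α, hα, rfl⟩) α hα
    rw [A.refl_self hαre, map_neg] at h1
    have h2 : Ψ α + Ψ α = 0 := by linear_combination - h1
    exact add_self_eq_zero.1 h2
  -- (f) contradiction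
  have hcontr : Ψ A.δ = 0 := by
    rw [← hsum, Finsupp.sum, map_sum]
    refine Finset.sum_eq_zero fun v hv => ?_
    rw [map_smul, hzero v (hsupp hv), smul_zero]
  rw [hΨδ] at hcontr
  have hzeroCard : F.card = 0 := by exact_mod_cast hcontr
  rw [Finset.card_eq_zero] at hzeroCard
  rw [hzeroCard] at hne
  exact Finset.not_nonempty_empty hne

lemma list_map_neg_sum {X : Type*} (l : List X) (f : X → V) :
    (l.map fun p => - f p).sum = - (l.map f).sum := by
  induction l with
  | nil => simp
  | cons a l ih => simp [ih]; abel

lemma memW_decomp (h : A.IsSubsystem Δ₁) {w : V ≃ₗ[ℂ] V} (hw : w ∈ A.weylOf Δ₁) :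
    ∃ l : List (ℚ × V × V), (∀ p ∈ l, p.2.1 ∈ Δ₁ ∧ p.2.2 ∈ Δ₁) ∧
      ∀ v, w v = v + (l.map fun p => (((p.1 : ℂ) * A.B p.2.1 v) • p.2.2)).sum := by
  induction hw using Subgroup.closure_induction with
  | mem x hx =>
    obtain ⟨γ, hγ, rfl⟩ := hx
    have hre := h.1 hγ
    obtain ⟨r, hr, hBr⟩ := A.norm_rat_pos γ hre
    refine ⟨[(-(2/r), γ, γ)], by simp [hγ], fun v => ?_⟩
    rw [A.refl_apply' hre v]
    simp only [List.map_cons, List.map_nil, List.sum_cons, List.sum_nil, add_zero]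
    rw [hBr, sub_eq_add_neg, ← neg_smul]
    congr 1
    push_cast
    ring
  | one => exact ⟨[], by simp, fun v => by simp⟩
  | mul x y hx hy px py =>
    obtain ⟨l, hl, hlf⟩ := px
    obtain ⟨l', hl', hlf'⟩ := py
    have pyP := A.memW_props h hy
    refine ⟨l' ++ l.map (fun p => (p.1, y.symm p.2.1, p.2.2)), ?_, fun v => ?_⟩
    · intro p hp
      rcases List.mem_append.1 hp with hp | hp
      · exact hl' p hp
      · obtain ⟨q, hq, rfl⟩ := List.mem_map.1 hp
        exact ⟨pyP.2.1 _ (hl q hq).1, (hl q hq).2⟩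
    · show x (y v) = _
      rw [hlf (y v)]
      have hB : ∀ p : ℚ × V × V, A.B p.2.1 (y v) = A.B (y.symm p.2.1) v := fun p => by
        conv_lhs => rw [← y.apply_symm_apply p.2.1]
        exact pyP.2.2.2 _ v
      have hT : (l.map fun p => (((p.1 : ℂ) * A.B p.2.1 (y v)) • p.2.2)).sum
          = (l.map fun p => (((p.1 : ℂ) * A.B (y.symm p.2.1) v) • p.2.2)).sum := by
        congr 1
        apply List.map_congr_left
        intro p hp
        rw [hB p]
      rw [hT, hlf' v, List.map_append, List.sum_append, List.map_map, add_assoc]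
      congr 1
  | inv x hx px =>
    obtain ⟨l, hl, hlf⟩ := px
    have pxP := A.memW_props h hx
    refine ⟨l.map (fun p => (-p.1, x p.2.1, p.2.2)), ?_, fun v => ?_⟩
    · intro p hp
      obtain ⟨q, hq, rfl⟩ := List.mem_map.1 hp
      exact ⟨pxP.1 _ (hl q hq).1, (hl q hq).2⟩
    · show x.symm v = _
      have h0 := hlf (x.symm v)
      rw [x.apply_symm_apply] at h0
      have hB : ∀ p : ℚ × V × V, A.B p.2.1 (x.symm v) = A.B (x p.2.1) v := fun p => by
        have h1 := pxP.2.2.2 p.2.1 (x.symm v)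
        rw [x.apply_symm_apply] at h1
        exact h1.symm
      have h2 : x.symm v
          = v - (l.map fun p => (((p.1 : ℂ) * A.B p.2.1 (x.symm v)) • p.2.2)).sum :=
        eq_sub_of_add_eq h0.symm
      rw [h2, sub_eq_add_neg]
      congr 1
      rw [← list_map_neg_sum l (fun p => (((p.1 : ℂ) * A.B p.2.1 (x.symm v)) • p.2.2)),
        List.map_map]
      congr 1
      apply List.map_congr_left
      intro p hp
      simp only [Function.comp_apply]
      rw [hB p]
      push_cast
      rw [neg_mul, neg_smul]

set_option linter.unusedSectionVars false in
lemma list_sum_finset_sum {X Y : Type*} (l : List X) (t : Finset Y) (F : X → Y → V) :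
    (l.map fun p => ∑ e ∈ t, F p e).sum = ∑ e ∈ t, (l.map fun p => F p e).sum := by
  induction l with
  | nil => simp
  | cons a l ih => simp [ih, Finset.sum_add_distrib]

set_option linter.unusedSectionVars false in
lemma list_sum_smul {X : Type*} (l : List X) (f : X → ℂ) (x : V) :
    (l.map fun p => f p • x).sum = (l.map f).sum • x := by
  induction l with
  | nil => simp
  | cons a l ih => simp [ih, add_smul]

lemma B_list_sum {X : Type*} (l : List X) (g : X → V) (v : V) :
    A.B (l.map g).sum v = (l.map fun p => A.B (g p) v).sum := by
  induction l with
  | nil => simp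
  | cons a l ih => simp [ih]

lemma B_listcomb_rat (l : List (ℚ × V)) (hl : ∀ p ∈ l, p.2 ∈ A.Δre) {γ : V}
    (hγ : γ ∈ A.Δre) : ∃ r : ℚ, A.B ((l.map fun p => ((p.1 : ℂ) • p.2)).sum) γ = (r : ℂ) := by
  induction l with
  | nil => exact ⟨0, by simp⟩
  | cons a l ih =>
    obtain ⟨r, hr⟩ := ih (fun p hp => hl p (List.mem_cons_of_mem a hp))
    obtain ⟨r', hr'⟩ := A.pairing_rat a.2 (hl a (List.mem_cons_self)) γ hγ
    refine ⟨a.1 * r' + r, ?_⟩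
    simp only [List.map_cons, List.sum_cons, map_add, LinearMap.add_apply, map_smul,
      LinearMap.smul_apply, smul_eq_mul, hr, hr']
    push_cast
    ring

lemma listcomb_mem_span (l : List (ℚ × V)) {s : Set V} (hl : ∀ p ∈ l, p.2 ∈ s) :
    ((l.map fun p => ((p.1 : ℂ) • p.2)).sum) ∈ Submodule.span ℂ s := by
  induction l with
  | nil => simp
  | cons a l ih =>
    simp only [List.map_cons, List.sum_cons]
    exact Submodule.add_mem _
      (Submodule.smul_mem _ _ (Submodule.subset_span (hl a (List.mem_cons_self))))
      (ih fun p hp => hl p (List.mem_cons_of_mem a hp))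

set_option linter.unusedSectionVars false in
lemma listcomb_eq_finset (l : List (ℚ × V)) {s : Set V} (hl : ∀ p ∈ l, p.2 ∈ s) :
    ∃ (t : Finset V) (c : V → ℚ), (↑t : Set V) ⊆ s ∧
      (l.map fun p => ((p.1 : ℂ) • p.2)).sum = ∑ α ∈ t, (c α : ℂ) • α := by
  classical
  induction l with
  | nil => exact ⟨∅, 0, by simp, by simp⟩
  | cons a l ih =>
    obtain ⟨t, c, hts, hteq⟩ := ih (fun p hp => hl p (List.mem_cons_of_mem a hp))
    have has : a.2 ∈ s := hl a (List.mem_cons_self)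
    by_cases ha : a.2 ∈ t
    · refine ⟨t, fun v => if v = a.2 then c v + a.1 else c v, hts, ?_⟩
      simp only [List.map_cons, List.sum_cons, hteq]
      rw [← Finset.add_sum_erase t _ ha, ← Finset.add_sum_erase t
        (fun v => ((if v = a.2 then c v + a.1 else c v : ℚ) : ℂ) • v) ha]
      rw [if_pos rfl]
      push_cast
      have herase : ∑ x ∈ t.erase a.2, ((if x = a.2 then c x + a.1 else c x : ℚ) : ℂ) • x
          = ∑ x ∈ t.erase a.2, ((c x : ℚ) : ℂ) • x := by
        refine Finset.sum_congr rfl fun x hx => ?_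
        rw [if_neg (Finset.ne_of_mem_erase hx)]
      rw [herase, add_smul]
      abel
    · refine ⟨insert a.2 t, fun v => if v = a.2 then a.1 else c v,
        by rw [Finset.coe_insert]; exact Set.insert_subset has hts, ?_⟩
      simp only [List.map_cons, List.sum_cons, hteq]
      rw [Finset.sum_insert ha, if_pos rfl]
      congr 1
      refine Finset.sum_congr rfl fun x hx => ?_
      rw [if_neg]
      intro hxa
      exact ha (hxa ▸ hx)

lemma fixer_eq_one (h : A.IsSubsystem Δ₁) (hfin : Δ₁.Finite) {w : V ≃ₗ[ℂ] V}
    (hw : w ∈ A.weylOf Δ₁) (hfix : ∀ α ∈ Δ₁, w α = α) : w = 1 := by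
  classical
  have hspan := A.finite_not_mem_span h hfin
  obtain ⟨l, hl, hlf⟩ := A.memW_decomp h hw
  letI : Module ℚ V := Module.compHom V (algebraMap ℚ ℂ)
  have hqs : ∀ (q : ℚ) (v : V), q • v = (q : ℂ) • v := by
    intro q v
    show (algebraMap ℚ ℂ q) • v = (q : ℂ) • v
    rw [eq_ratCast (algebraMap ℚ ℂ) q]
  obtain ⟨b, hb_sub, hb_span, hb_ind⟩ := exists_linearIndependent ℚ Δ₁
  have hbfin : b.Finite := hfin.subset hb_sub
  haveI : Fintype ↥b := hbfin.fintype
  set bf := hbfin.toFinset with hbf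
  have hbfb : ∀ x, x ∈ bf ↔ x ∈ b := fun x => hbfin.mem_toFinset
  have hmem_span : ∀ β ∈ Δ₁, β ∈ Submodule.span ℚ b := fun β hβ =>
    hb_span ▸ Submodule.subset_span hβ
  choose! m hm_supp hm_sum using fun β (hβ : β ∈ Δ₁) => Submodule.mem_span_set.1 (hmem_span β hβ)
  have hexp : ∀ β ∈ Δ₁, β = ∑ e ∈ bf, ((m β e : ℚ) : ℂ) • e := by
    intro β hβ
    have h1 : (m β).sum (fun mi r => r • mi) = ∑ e ∈ bf, (m β) e • e :=
      Finsupp.sum_of_support_subset _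
        (fun x hx => (hbfb x).2 (hm_supp β hβ (Finset.mem_coe.2 hx))) _ (by intros; simp)
    conv_lhs => rw [← hm_sum β hβ]
    rw [h1]
    exact Finset.sum_congr rfl fun e he => hqs _ _
  set zl : V → List (ℚ × V) := fun e => l.map fun p => (p.1 * m p.2.2 e, p.2.1) with hzl
  set Z : V → V := fun e => ((zl e).map fun p => ((p.1 : ℂ) • p.2)).sum with hZ
  have hzl_mem : ∀ e, ∀ p ∈ zl e, p.2 ∈ Δ₁ := by
    intro e p hp
    rw [hzl] at hp
    obtain ⟨q, hq, rfl⟩ := List.mem_map.1 hp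
    exact (hl q hq).1
  -- the key decomposition
  have key : ∀ v, w v = v + ∑ e ∈ bf, (A.B (Z e) v) • e := by
    intro v
    rw [hlf v]
    congr 1
    have step1 : ∀ p ∈ l, (((p.1 : ℂ) * A.B p.2.1 v) • p.2.2)
        = ∑ e ∈ bf, ((((p.1 * m p.2.2 e : ℚ)) : ℂ) * A.B p.2.1 v) • e := by
      intro p hp
      conv_lhs => rw [hexp p.2.2 (hl p hp).2]
      rw [Finset.smul_sum]
      refine Finset.sum_congr rfl fun e he => ?_
      rw [smul_smul]
      congr 1
      push_cast
      ring
    rw [List.map_congr_left step1, list_sum_finset_sum]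
    refine Finset.sum_congr rfl fun e he => ?_
    have hZBe : A.B (Z e) v = (l.map fun p => (((p.1 * m p.2.2 e : ℚ) : ℂ) * A.B p.2.1 v)).sum := by
      simp only [hZ, hzl, List.map_map]
      rw [A.B_list_sum]
      congr 1
      apply List.map_congr_left
      intro p hp
      simp only [Function.comp_apply, map_smul, LinearMap.smul_apply, smul_eq_mul]
    rw [list_sum_smul, hZBe]
  -- B (Z e) kills Δ₁
  have hZγ : ∀ e ∈ bf, ∀ γ ∈ Δ₁, A.B (Z e) γ = 0 := by
    intro e he γ hγ
    have h0 : ∑ e' ∈ bf, (A.B (Z e') γ) • e' = 0 := by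
      have hk := key γ
      rw [hfix γ hγ, left_eq_add] at hk
      exact hk
    have hrat : ∀ e' ∈ bf, ∃ r : ℚ, A.B (Z e') γ = (r : ℂ) :=
      fun e' he' => A.B_listcomb_rat (zl e') (fun p hp => h.1 (hzl_mem e' p hp)) (h.1 hγ)
    choose! r hr using hrat
    have h0' : ∑ e' ∈ bf, (r e' : ℂ) • e' = 0 := by
      rw [← h0]
      exact (Finset.sum_congr rfl fun e' he' => by rw [hr e' he']).symm
    have h0q : ∑ x : ↥b, (fun x : ↥b => r (x : V)) x • (x : V) = 0 := by
      rw [← Finset.sum_subtype bf hbfb (fun e' => r e' • e')]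
      rw [← h0']
      exact Finset.sum_congr rfl fun e' he' => hqs _ _
    have hz := linearIndependent_iff'.1 hb_ind Finset.univ (fun x : ↥b => r (x : V)) h0q
      ⟨e, (hbfb e).1 he⟩ (Finset.mem_univ _)
    have hz' : r e = 0 := hz
    rw [hr e he, hz']
    norm_num
  -- each Z e vanishes
  have hZ0 : ∀ e ∈ bf, Z e = 0 := by
    intro e he
    have hBZZ : A.B (Z e) (Z e) = 0 := by
      conv_lhs => rw [hZ]
      simp only
      rw [map_list_sum (A.B (Z e)) _, List.map_map]
      apply List.sum_eq_zero
      intro x hx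
      obtain ⟨p, hp, rfl⟩ := List.mem_map.1 hx
      simp only [Function.comp_apply, map_smul, smul_eq_mul]
      rw [hZγ e he p.2 (hzl_mem e p hp), mul_zero]
    obtain ⟨t, c, hts, hteq⟩ := listcomb_eq_finset (zl e) (hzl_mem e)
    obtain ⟨q, hq0, hqB, hq⟩ := A.semidef t c (hts.trans h.1)
    have hZe : Z e = ∑ α ∈ t, (c α : ℂ) • α := hteq
    have hqz : q = 0 := by
      have : (q : ℂ) = 0 := by rw [← hqB, ← hZe, hBZZ]
      exact_mod_cast this
    obtain ⟨sR, hsR⟩ := hq hqz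
    by_cases hs : sR = 0
    · rw [hZe, hsR, hs]
      simp
    · exfalso
      apply hspan
      have hδ : A.δ = ((sR : ℂ))⁻¹ • Z e := by
        rw [hZe, hsR, smul_smul, inv_mul_cancel₀ (by exact_mod_cast hs), one_smul]
      rw [hδ]
      exact Submodule.smul_mem _ _ (listcomb_mem_span (zl e) (hzl_mem e))
  have hone : ∀ v, w v = v := by
    intro v
    rw [key v]
    rw [Finset.sum_congr rfl fun e he => by rw [hZ0 e he, map_zero, LinearMap.zero_apply,
      zero_smul]]
    simp
  exact LinearEquiv.toLinearMap_injective (LinearMap.ext hone)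

lemma weyl_finite (h : A.IsSubsystem Δ₁) (hfin : Δ₁.Finite) :
    ((A.weylOf Δ₁ : Subgroup (V ≃ₗ[ℂ] V)) : Set (V ≃ₗ[ℂ] V)).Finite := by
  classical
  haveI : Finite ↥Δ₁ := hfin.to_subtype
  have hmap : ∀ w : ↥((A.weylOf Δ₁ : Subgroup (V ≃ₗ[ℂ] V)) : Set (V ≃ₗ[ℂ] V)),
      ∀ a : ↥Δ₁, ((w : V ≃ₗ[ℂ] V) (a : V)) ∈ Δ₁ := fun w a => (A.memW_props h w.2).1 _ a.2
  set f : ↥((A.weylOf Δ₁ : Subgroup (V ≃ₗ[ℂ] V)) : Set (V ≃ₗ[ℂ] V)) → (↥Δ₁ → ↥Δ₁) :=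
    fun w a => ⟨_, hmap w a⟩ with hf
  have hinj : Function.Injective f := by
    intro w w' hww
    have hfixv : ∀ α ∈ Δ₁, ((w' : V ≃ₗ[ℂ] V)⁻¹ * (w : V ≃ₗ[ℂ] V)) α = α := by
      intro α hα
      have h1 : f w ⟨α, hα⟩ = f w' ⟨α, hα⟩ := congrFun hww ⟨α, hα⟩
      have hv : (w : V ≃ₗ[ℂ] V) α = (w' : V ≃ₗ[ℂ] V) α := congrArg Subtype.val h1
      show (w' : V ≃ₗ[ℂ] V).symm ((w : V ≃ₗ[ℂ] V) α) = α
      rw [hv, LinearEquiv.symm_apply_apply]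
    have hmem : ((w' : V ≃ₗ[ℂ] V)⁻¹ * (w : V ≃ₗ[ℂ] V)) ∈ A.weylOf Δ₁ :=
      mul_mem (inv_mem w'.2) w.2
    have h1 := A.fixer_eq_one h hfin hmem hfixv
    exact Subtype.ext (inv_mul_eq_one.1 h1).symm
  exact Set.finite_coe_iff.1 (Finite.of_injective f hinj)

lemma exists_pair (h : A.IsSubsystem Δ₁) (hinf : ¬ Δ₁.Finite) :
    ∃ α ∈ Δ₁, ∃ β ∈ Δ₁, ∃ n : ℤ, n ≠ 0 ∧ β = α + (n : ℂ) • A.δ := by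
  classical
  obtain ⟨F, hF⟩ := A.cl_finite
  haveI : Infinite ↥Δ₁ := Set.infinite_coe_iff.2 hinf
  choose! γ hγF nn hnn using fun α (hα : α ∈ A.Δre) => hF α hα
  have hmem : ∀ a : ↥Δ₁, γ (a : V) ∈ F := fun a => hγF _ (h.1 a.2)
  obtain ⟨a, b, hab, heq⟩ := Finite.exists_ne_map_eq_of_infinite
    (fun a : ↥Δ₁ => (⟨γ (a : V), hmem a⟩ : ↥F))
  have ha := hnn _ (h.1 a.2)
  have hb := hnn _ (h.1 b.2)
  have hγeq : γ (a : V) = γ (b : V) := congrArg Subtype.val heq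
  have hzsmul : ∀ (k : ℤ), (k : ℤ) • A.δ = (k : ℂ) • A.δ := fun k =>
    (Int.cast_smul_eq_zsmul ℂ k A.δ).symm
  refine ⟨a, a.2, b, b.2, nn (b : V) - nn (a : V), ?_, ?_⟩
  · intro h0
    apply hab
    apply Subtype.ext
    have hnb : nn (b : V) = nn (a : V) := by omega
    rw [ha, hb, hγeq, hnb]
  · rw [Int.cast_smul_eq_zsmul ℂ]
    generalize hna : nn (a : V) = na at ha ⊢
    generalize hnb : nn (b : V) = nb at hb ⊢
    rw [sub_zsmul, ha, hb, hγeq]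
    abel

lemma infinite_memRatSpan (h : A.IsSubsystem Δ₁) (hinf : ¬ Δ₁.Finite) :
    AffineRootSystem.memRatSpan Δ₁ A.δ := by
  classical
  obtain ⟨α, hα, β, hβ, n, hn, hβeq⟩ := A.exists_pair h hinf
  have hnC : ((n : ℚ) : ℂ) ≠ 0 := by
    simp only [ne_eq, Rat.cast_eq_zero, Int.cast_eq_zero]
    exact hn
  have hne : α ≠ β := by
    rintro rfl
    rw [left_eq_add] at hβeq
    rcases smul_eq_zero.1 hβeq with h1 | h1
    · exact hn (by exact_mod_cast h1)
    · exact A.δ_ne h1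
  refine ⟨{α, β}, fun v => if v = β then (n : ℚ)⁻¹ else -(n : ℚ)⁻¹, ?_, ?_⟩
  · intro v hv
    simp only [Finset.coe_insert, Finset.coe_singleton, Set.mem_insert_iff,
      Set.mem_singleton_iff] at hv
    rcases hv with rfl | rfl
    exacts [hα, hβ]
  · rw [Finset.sum_insert (by simp [hne]), Finset.sum_singleton]
    simp only [if_neg hne, if_pos rfl]
    rw [hβeq, smul_add]
    push_cast
    rw [smul_smul, inv_mul_cancel₀ (by exact_mod_cast hn), one_smul, neg_smul]
    abel

lemma weyl_infinite (h : A.IsSubsystem Δ₁) (hinf : ¬ Δ₁.Finite) :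
    ¬ ((A.weylOf Δ₁ : Subgroup (V ≃ₗ[ℂ] V)) : Set (V ≃ₗ[ℂ] V)).Finite := by
  obtain ⟨α, hα, β, hβ, n, hn, hβeq⟩ := A.exists_pair h hinf
  intro hWfin
  have hαre := h.1 hα
  have hβre := h.1 hβ
  set c : ℂ := (n : ℂ) with hc
  have hcne : c ≠ 0 := by
    rw [hc]
    exact_mod_cast hn
  set g : V ≃ₗ[ℂ] V := A.reflEquiv α * A.reflEquiv β with hg
  have hgW : g ∈ A.weylOf Δ₁ := mul_mem
    (Subgroup.subset_closure ⟨α, hα, rfl⟩) (Subgroup.subset_closure ⟨β, hβ, rfl⟩)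
  -- basic form values
  have hBδα : A.B A.δ α = 0 := A.B_δ_re α hαre
  have hBββ : A.B β β = A.B α α := by
    rw [hβeq]
    simp only [map_add, map_smul, LinearMap.add_apply, LinearMap.smul_apply, smul_eq_mul]
    rw [A.B_re_δ hαre, A.B_δ_re α hαre, A.B_δ_δ]
    ring
  have hBβα : A.B β α = A.B α α := by
    rw [hβeq]
    simp only [map_add, map_smul, LinearMap.add_apply, LinearMap.smul_apply, smul_eq_mul]
    rw [A.B_δ_re α hαre]
    ring
  have hsβα : A.reflEquiv β α = -α - (2 * c) • A.δ := by
    rw [A.refl_apply' hβre, hBββ, hBβα, div_mul_cancel₀ 2 (A.B_norm_ne hαre), two_smul, hβeq]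
    rw [two_mul, add_smul]
    abel
  -- g^k α = α - (2 * k * c) • δ
  have hpow : ∀ k : ℕ, (g ^ k) α = α - ((2 * k * c) • A.δ) := by
    intro k
    induction k with
    | zero => simp
    | succ k ih =>
      rw [pow_succ']
      show A.reflEquiv α (A.reflEquiv β ((g ^ k) α)) = _
      rw [ih]
      simp only [map_sub, map_smul, map_neg, A.refl_δ hβre, A.refl_δ hαre,
        A.refl_self hαre, hsβα]
      push_cast
      rw [mul_add, mul_one, add_mul, add_smul]
      abel
  have hinj : Function.Injective (fun k : ℕ => g ^ k) := by
    intro k j hkj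
    by_contra hne
    have hkj' : g ^ k = g ^ j := hkj
    have h1 : (g ^ k) α = (g ^ j) α := by rw [hkj']
    rw [hpow k, hpow j, sub_right_injective.eq_iff] at h1
    have h2 : ((2 * k * c) - (2 * j * c)) • A.δ = 0 := by rw [sub_smul, h1, sub_self]
    rcases smul_eq_zero.1 h2 with h3 | h3
    · have h4 : ((k : ℂ) - j) * (2 * c) = 0 := by linear_combination h3
      rcases mul_eq_zero.1 h4 with h5 | h5
      · have h6 : (k : ℂ) = j := sub_eq_zero.1 h5
        exact hne (by exact_mod_cast h6)
      · exact hcne ((mul_eq_zero.1 h5).resolve_left two_ne_zero)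
    · exact A.δ_ne h3
  exact (Set.infinite_of_injective_forall_mem hinj
    (fun k : ℕ => pow_mem hgW k)) hWfin

end Aux

end AffineRootSystem

/-- For a subsystem `Δ₁` of the real roots of an affine root
system the following are equivalent: (i) `Δ₁` is finite; (ii) the group `W₁`
generated by the reflections `s_α`, `α ∈ Δ₁`, is finite; (iii) `δ` is not in
the `ℂ`-span of `Δ₁`; (iv) `δ` is not in the `ℚ`-span of `Δ₁`. -/
theorem statement0 {ι V : Type*} [Fintype ι] [AddCommGroup V] [Module ℂ V]
    (A : AffineRootSystem ι V) (Δ₁ : Set V) (h : A.IsSubsystem Δ₁) :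
    (Δ₁.Finite ↔ ((A.weylOf Δ₁ : Subgroup (V ≃ₗ[ℂ] V)) : Set (V ≃ₗ[ℂ] V)).Finite) ∧
    (Δ₁.Finite ↔ A.δ ∉ Submodule.span ℂ Δ₁) ∧
    (Δ₁.Finite ↔ ¬ AffineRootSystem.memRatSpan Δ₁ A.δ) := by
  have hr2s : AffineRootSystem.memRatSpan Δ₁ A.δ → A.δ ∈ Submodule.span ℂ Δ₁ := by
    rintro ⟨t, c, hts, heq⟩
    rw [heq]
    exact Submodule.sum_mem _ fun α hα =>
      Submodule.smul_mem _ _ (Submodule.subset_span (hts hα))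
  have hiff2 : Δ₁.Finite ↔ A.δ ∉ Submodule.span ℂ Δ₁ := by
    constructor
    · exact fun hfin => A.finite_not_mem_span h hfin
    · intro hns
      by_contra hinf
      exact hns (hr2s (A.infinite_memRatSpan h hinf))
  refine ⟨⟨fun hfin => A.weyl_finite h hfin, fun hW => ?_⟩, hiff2,
    ⟨fun hfin hr => (hiff2.1 hfin) (hr2s hr), fun hr => ?_⟩⟩
  · by_contra hinf
    exact A.weyl_infinite h hinf hW
  · by_contra hinf
    exact hr (A.infinite_memRatSpan h hinf)
end

section
/- The set of simple roots Π₁ of any subsystem Δ₁ of the real roots of an affine root system is finite. -/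
open scoped BigOperators

namespace AffineRootSystem

variable {ι V : Type*} [Fintype ι] [AddCommGroup V] [Module ℂ V]

lemma Baa_ne (A : AffineRootSystem ι V) {a : V} (ha : a ∈ A.Δre) : A.B a a ≠ 0 := by
  obtain ⟨q, hq, he⟩ := A.norm_rat_pos a ha
  rw [he]
  exact_mod_cast hq.ne'

lemma fiber_lemma (A : AffineRootSystem ι V) (Δ₁ : Set V) (h : A.IsSubsystem Δ₁) (γ : V)
    (n₁ n₂ n₃ : ℤ) (h12 : n₁ ≠ n₂) (h13 : n₁ ≠ n₃) (h23 : n₂ ≠ n₃)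
    (hx1 : γ + (n₁ : ℂ) • A.δ ∈ A.simpleOf Δ₁)
    (hx2 : γ + (n₂ : ℂ) • A.δ ∈ A.simpleOf Δ₁)
    (hx3 : γ + (n₃ : ℂ) • A.δ ∈ A.simpleOf Δ₁) : False := by
  set e : ℤ → V := fun t => γ + (t : ℂ) • A.δ with he
  have hp1 : e n₁ ∈ A.posPart Δ₁ := hx1.1
  have hδ1 : e n₁ ∈ A.Δre := h.1 hp1.1
  -- (δ, γ) = 0
  have h0 : A.B A.δ γ = 0 := by
    have h0' := A.B_δ_re _ hδ1
    simpa [he, A.B_δ_δ] using h0'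
  have h0' : A.B γ A.δ = 0 := (A.symm γ A.δ).trans h0
  -- (e s, e t) = (γ, γ)
  have hBst : ∀ s t : ℤ, A.B (e s) (e t) = A.B γ γ := by
    intro s t
    simp [he, A.B_δ_δ, h0, h0']
  have hγγ : A.B γ γ ≠ 0 := hBst n₁ n₁ ▸ A.Baa_ne hδ1
  -- injectivity of e
  have einj : ∀ {s t : ℤ}, e s = e t → s = t := by
    intro s t hst
    have h1 : ((s : ℂ) - t) • A.δ = 0 := by
      rw [sub_smul, sub_eq_zero]
      exact add_left_cancel hst
    rcases smul_eq_zero.mp h1 with h2 | h2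
    · exact_mod_cast sub_eq_zero.mp h2
    · exact absurd h2 A.δ_ne
  -- -(e s) is never e t
  have hne : ∀ s t : ℤ, -(e s) ≠ e t := by
    intro s t hst
    apply hγγ
    have h2 : e t + e s = 0 := by rw [← hst]; exact neg_add_cancel _
    have h3 := congrArg (A.B γ) h2
    simp only [he, map_add, map_smul, smul_eq_mul, h0', map_zero, mul_zero, add_zero] at h3
    linear_combination h3 / 2
  -- reflection formula along the string
  have refl_line : ∀ s t : ℤ, e s ∈ A.Δre → ∀ ε : ℂ,
      A.refl (e s) (ε • e t) = (-ε) • e (2 * s - t) := by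
    intro s t hs ε
    have hc : A.B ((2 / A.B (e s) (e s)) • e s) (ε • e t) = 2 * ε := by
      simp only [map_smul, LinearMap.smul_apply, smul_eq_mul, hBst]
      field_simp
    show A.reflEquiv (e s) (ε • e t) = _
    rw [A.reflEquiv_apply _ hs, hc]
    simp only [he]
    push_cast
    module
  -- the two moves
  have move : ∀ m : ℤ, γ + (m : ℂ) • A.δ ∈ A.simpleOf Δ₁ → ∀ t : ℤ,
      (e t ∈ Δ₁ ∧ e t ∈ A.pos) → t ≠ m →
      (-(e (2 * m - t)) ∈ Δ₁ ∧ -(e (2 * m - t)) ∈ A.pos) := by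
    intro m hm t ht htm
    have hmre : e m ∈ A.Δre := h.1 hm.1.1
    have hβ : e t ∈ A.posPart Δ₁ \ {e m} := by
      refine ⟨⟨ht.1, ht.2⟩, ?_⟩
      simp only [Set.mem_singleton_iff]
      exact fun hc => htm (einj hc)
    have hr := hm.2 (e t) hβ
    have hrl := refl_line m t hmre 1
    rw [one_smul] at hrl
    rw [hrl] at hr
    rw [show ((-1 : ℂ)) • e (2 * m - t) = -(e (2 * m - t)) from neg_one_smul ℂ _] at hr
    exact ⟨hr.1, hr.2⟩
  have move' : ∀ m : ℤ, γ + (m : ℂ) • A.δ ∈ A.simpleOf Δ₁ → ∀ t : ℤ,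
      (-(e t) ∈ Δ₁ ∧ -(e t) ∈ A.pos) →
      (e (2 * m - t) ∈ Δ₁ ∧ e (2 * m - t) ∈ A.pos) := by
    intro m hm t ht
    have hmre : e m ∈ A.Δre := h.1 hm.1.1
    have hβ : -(e t) ∈ A.posPart Δ₁ \ {e m} := by
      refine ⟨⟨ht.1, ht.2⟩, ?_⟩
      simp only [Set.mem_singleton_iff]
      exact hne t m
    have hr := hm.2 (-(e t)) hβ
    have hrl := refl_line m t hmre (-1)
    rw [neg_one_smul] at hrl
    rw [hrl] at hr
    rw [neg_neg, one_smul] at hr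
    exact ⟨hr.1, hr.2⟩
  -- composite translation step
  have step : ∀ m k t : ℤ, γ + (m : ℂ) • A.δ ∈ A.simpleOf Δ₁ →
      γ + (k : ℂ) • A.δ ∈ A.simpleOf Δ₁ →
      (e t ∈ Δ₁ ∧ e t ∈ A.pos) → t ≠ m →
      (e (t + 2 * (k - m)) ∈ Δ₁ ∧ e (t + 2 * (k - m)) ∈ A.pos) := by
    intro m k t hm hk ht htm
    have h1 := move m hm t ht htm
    have h2 := move' k hk (2 * m - t) h1
    have h3 : 2 * k - (2 * m - t) = t + 2 * (k - m) := by ring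
    rwa [h3] at h2
  -- step up / step down, dodging blocks
  have step_up : ∀ t : ℤ, (e t ∈ Δ₁ ∧ e t ∈ A.pos) →
      (e (t + 2 * (n₂ - n₁)) ∈ Δ₁ ∧ e (t + 2 * (n₂ - n₁)) ∈ A.pos) := by
    intro t ht
    by_cases h1 : t = n₁
    · rw [h1] at ht ⊢
      have a1 := step n₃ n₂ n₁ hx3 hx2 ht h13
      have a2 := step n₁ n₃ (n₁ + 2 * (n₂ - n₃)) hx1 hx3 a1 (by omega)
      have h3 : n₁ + 2 * (n₂ - n₃) + 2 * (n₃ - n₁) = n₁ + 2 * (n₂ - n₁) := by ring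
      rwa [h3] at a2
    · exact step n₁ n₂ t hx1 hx2 ht h1
  have step_down : ∀ t : ℤ, (e t ∈ Δ₁ ∧ e t ∈ A.pos) →
      (e (t - 2 * (n₂ - n₁)) ∈ Δ₁ ∧ e (t - 2 * (n₂ - n₁)) ∈ A.pos) := by
    intro t ht
    by_cases h1 : t = n₂
    · rw [h1] at ht ⊢
      have a1 := step n₃ n₁ n₂ hx3 hx1 ht h23
      have a2 := step n₂ n₃ (n₂ + 2 * (n₁ - n₃)) hx2 hx3 a1 (by omega)
      have h3 : n₂ + 2 * (n₁ - n₃) + 2 * (n₃ - n₂) = n₂ - 2 * (n₂ - n₁) := by ring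
      rwa [h3] at a2
    · have a1 := step n₂ n₁ t hx2 hx1 ht h1
      have h3 : t + 2 * (n₁ - n₂) = t - 2 * (n₂ - n₁) := by ring
      rwa [h3] at a1
  -- full lattice of translates
  have lattice : ∀ k : ℤ, ∀ t : ℤ, (e t ∈ Δ₁ ∧ e t ∈ A.pos) →
      (e (t + 2 * k * (n₂ - n₁)) ∈ Δ₁ ∧ e (t + 2 * k * (n₂ - n₁)) ∈ A.pos) := by
    intro k
    induction k using Int.induction_on with
    | zero => intro t ht; simpa using ht
    | succ i ih =>
      intro t ht
      have a1 := step_up _ (ih t ht)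
      have h3 : t + 2 * (i : ℤ) * (n₂ - n₁) + 2 * (n₂ - n₁)
          = t + 2 * ((i : ℤ) + 1) * (n₂ - n₁) := by ring
      rwa [h3] at a1
    | pred i ih =>
      intro t ht
      have a1 := step_down _ (ih t ht)
      have h3 : t + 2 * (-(i : ℤ)) * (n₂ - n₁) - 2 * (n₂ - n₁)
          = t + 2 * (-(i : ℤ) - 1) * (n₂ - n₁) := by ring
      rwa [h3] at a1
  -- the final contradiction
  have hu : n₂ - n₁ ≠ 0 := fun hc => h12 (by omega)
  have key : ∀ j : ℤ, 2 * j * (n₂ - n₁) ≠ 0 → n₁ + 2 * j * (n₂ - n₁) ≠ n₃ → False := by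
    intro j hj0 hj3
    have hPn₁ : e n₁ ∈ Δ₁ ∧ e n₁ ∈ A.pos := ⟨hp1.1, hp1.2⟩
    have hT : e (n₁ + 2 * j * (n₂ - n₁)) ∈ Δ₁ ∧ e (n₁ + 2 * j * (n₂ - n₁)) ∈ A.pos :=
      lattice j n₁ hPn₁
    have hT' : e (n₁ + 2 * (-j) * (n₂ - n₁)) ∈ Δ₁ ∧ e (n₁ + 2 * (-j) * (n₂ - n₁)) ∈ A.pos :=
      lattice (-j) n₁ hPn₁
    have hTn : n₁ + 2 * j * (n₂ - n₁) ≠ n₁ := by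
      intro hE
      exact hj0 (by linarith)
    have hmv := move n₁ hx1 _ hT hTn
    have hEq : 2 * n₁ - (n₁ + 2 * j * (n₂ - n₁)) = n₁ + 2 * (-j) * (n₂ - n₁) := by ring
    rw [hEq] at hmv
    exact A.not_both _ (h.1 hT'.1) ⟨hT'.2, hmv.2⟩
  by_cases hc : n₁ + 2 * 1 * (n₂ - n₁) = n₃
  · apply key 2
    · intro hE; exact hu (by linarith)
    · intro hE; exact hu (by omega)
  · apply key 1
    · intro hE; exact hu (by linarith)
    · exact hc

end AffineRootSystem


/-- The set of simple roots `Π₁` of any subsystem `Δ₁` of the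
real roots of an affine root system is finite. -/
theorem statement2 {ι V : Type*} [Fintype ι] [AddCommGroup V] [Module ℂ V]
    (A : AffineRootSystem ι V) (Δ₁ : Set V) (h : A.IsSubsystem Δ₁) :
    (A.simpleOf Δ₁).Finite := by
  obtain ⟨F, hF⟩ := A.cl_finite
  have hsub : A.simpleOf Δ₁ ⊆ ⋃ γ ∈ (F : Set V),
      {x | x ∈ A.simpleOf Δ₁ ∧ ∃ n : ℤ, x = γ + (n : ℂ) • A.δ} := by
    intro x hx
    have hxre : x ∈ A.Δre := h.1 hx.1.1
    obtain ⟨γ, hγF, n, hn⟩ := hF x hxre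
    refine Set.mem_biUnion hγF ⟨hx, n, ?_⟩
    rw [hn, Int.cast_smul_eq_zsmul]
  refine Set.Finite.subset (Set.Finite.biUnion F.finite_toSet ?_) hsub
  intro γ _
  by_contra hin
  have hinf : {x | x ∈ A.simpleOf Δ₁ ∧ ∃ n : ℤ, x = γ + (n : ℂ) • A.δ}.Infinite := hin
  obtain ⟨a, ha⟩ := hinf.nonempty
  obtain ⟨b, hb⟩ := (hinf.diff (Set.finite_singleton a)).nonempty
  obtain ⟨c, hc⟩ := (hinf.diff ((Set.finite_singleton b).insert a)).nonempty
  obtain ⟨haS, na, hna⟩ := ha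
  obtain ⟨⟨hbS, nb, hnb⟩, hba⟩ := hb
  obtain ⟨⟨hcS, nc, hnc⟩, hcab⟩ := hc
  have hab : a ≠ b := fun hE => hba (by rw [← hE]; exact rfl)
  have hac : a ≠ c := fun hE => hcab (by rw [← hE]; exact Set.mem_insert a {b})
  have hbc : b ≠ c := fun hE => hcab (by rw [← hE]; exact Set.mem_insert_of_mem a rfl)
  have h12 : na ≠ nb := by
    intro hE; apply hab; rw [hna, hnb, hE]
  have h13 : na ≠ nc := by
    intro hE; apply hac; rw [hna, hnc, hE]
  have h23 : nb ≠ nc := by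
    intro hE; apply hbc; rw [hnb, hnc, hE]
  exact A.fiber_lemma Δ₁ h γ na nb nc h12 h13 h23 (hna ▸ haS) (hnb ▸ hbS) (hnc ▸ hcS)
end

section
/- Let λ ∈ 𝔥* with Δ(λ) ≠ ∅, where Δ(λ) = {α ∈ Δ_re : (α∨, λ+ρ) ∈ ℤ}. Then Δ(λ) is finite if and only if (δ, λ+ρ) ∉ ℚ. -/
open scoped BigOperators

namespace AffineRootSystem

variable {ι V : Type*} [Fintype ι] [AddCommGroup V] [Module ℂ V]
variable (A : AffineRootSystem ι V)

lemma B_norm_shift {α : V} (hα : α ∈ A.Δre) (m : ℤ) :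
    A.B (α + m • A.δ) (α + m • A.δ) = A.B α α := by
  have h1 : A.B A.δ α = 0 := A.B_δ_re α hα
  have h2 : A.B α A.δ = 0 := by rw [A.symm]; exact h1
  simp [map_add, map_zsmul, LinearMap.add_apply, LinearMap.smul_apply, h1, h2, A.B_δ_δ]

lemma pair_shift {α : V} (hα : α ∈ A.Δre) (m : ℤ) (v : V) :
    A.pair (α + m • A.δ) v = A.pair α v + (2 / A.B α α) * (m : ℂ) * A.B A.δ v := by
  unfold pair coroot
  rw [A.B_norm_shift hα m]
  simp only [map_add, map_zsmul, LinearMap.add_apply, LinearMap.smul_apply, map_smul,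
    smul_eq_mul, zsmul_eq_mul]
  ring

/-- If `(δ, λ+ρ)` is irrational, two integral roots in the same class mod `ℤδ`
coincide. -/
lemma class_unique (lam : V)
    (hirr : ¬ ∃ q : ℚ, A.B A.δ (lam + A.ρ) = (q : ℂ))
    {α : V} (hα : α ∈ A.Δint lam) {m : ℤ} (hβ : α + m • A.δ ∈ A.Δint lam) :
    m = 0 := by
  obtain ⟨hαre, k, hk⟩ := hα
  obtain ⟨hβre, k', hk'⟩ := hβ
  by_contra hm
  obtain ⟨p, hp, hpval⟩ := A.norm_rat_pos α hαre
  apply hirr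
  have key := A.pair_shift hαre m (lam + A.ρ)
  rw [hk', hk, hpval] at key
  have hp0 : (p : ℂ) ≠ 0 := by exact_mod_cast hp.ne'
  have hm0 : (m : ℂ) ≠ 0 := Int.cast_ne_zero.2 hm
  refine ⟨(k' - k) * p / (2 * m), ?_⟩
  field_simp at key
  simp only [map_add] at key ⊢
  push_cast
  rw [eq_div_iff (mul_ne_zero two_ne_zero hm0)]
  linear_combination -key

end AffineRootSystem

/-- For `λ ∈ 𝔥*` with `Δ(λ) ≠ ∅`, the integral root system
`Δ(λ)` is finite iff `(δ, λ+ρ) ∉ ℚ`. -/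
theorem statement4 {ι V : Type*} [Fintype ι] [AddCommGroup V] [Module ℂ V]
    (A : AffineRootSystem ι V) (lam : V) (h : (A.Δint lam).Nonempty) :
    (A.Δint lam).Finite ↔ ¬ ∃ q : ℚ, A.B A.δ (lam + A.ρ) = (q : ℂ) := by
  constructor
  · rintro hfin ⟨q, hq⟩
    obtain ⟨α0, hα0⟩ := h
    obtain ⟨hα0re, k, hk⟩ := hα0
    obtain ⟨p, hp, hpval⟩ := A.norm_rat_pos α0 hα0re
    obtain ⟨r, hr, hstr⟩ := A.string α0 hα0re
    set u : ℚ := 2 * r * q / p with hu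
    set f : ℤ → V := fun m => α0 + ((m * u.den) * r) • A.δ with hf
    have hp0 : (p : ℚ) ≠ 0 := hp.ne'
    have hmem : ∀ m : ℤ, f m ∈ A.Δint lam := by
      intro m
      refine ⟨hstr (m * u.den), k + m * u.num, ?_⟩
      rw [A.pair_shift hα0re, hk, hpval]
      have hden : (u.den : ℚ) * u = (u.num : ℚ) := Rat.den_mul_eq_num u
      have hq' : (2 / (p:ℚ)) * ((m * u.den * r : ℤ) : ℚ) * q = (m : ℚ) * u.num := by
        rw [← hden, hu]
        field_simp
        push_cast
        ring
      have : (2 / (p:ℂ)) * ((m * u.den * r : ℤ) : ℂ) * (q:ℂ) = ((m : ℚ) * u.num : ℚ) := by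
        exact_mod_cast congrArg (fun x : ℚ => (x : ℂ)) hq'
      rw [hq, this]
      push_cast
      ring
    have hinj : Function.Injective f := by
      intro m m' hmm
      simp only [hf, add_right_inj] at hmm
      have h0 : ((m * u.den * r - m' * u.den * r : ℤ)) • A.δ = 0 := by
        rw [sub_smul, hmm, sub_self]
      rw [← Int.cast_smul_eq_zsmul ℂ] at h0
      rcases smul_eq_zero.1 h0 with hc | hc
      · have h3 : (m * u.den * r - m' * u.den * r : ℤ) = 0 := by exact_mod_cast hc
        have hd : ((u.den : ℤ)) * r ≠ 0 :=
          mul_ne_zero (by exact_mod_cast u.den_ne_zero) hr.ne'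
        refine mul_right_cancel₀ hd ?_
        rw [← mul_assoc, ← mul_assoc]
        linarith [h3]
      · exact absurd hc A.δ_ne
    exact (Set.infinite_of_injective_forall_mem hinj hmem) hfin
  · intro hirr
    obtain ⟨F, hF⟩ := A.cl_finite
    have hsub : A.Δint lam ⊆
        ⋃ γ ∈ (F : Set V), {β | β ∈ A.Δint lam ∧ ∃ n : ℤ, β = γ + n • A.δ} := by
      intro α hα
      obtain ⟨γ, hγF, n, hn⟩ := hF α hα.1
      exact Set.mem_biUnion hγF ⟨hα, n, hn⟩
    refine Set.Finite.subset (Set.Finite.biUnion F.finite_toSet fun γ _ => ?_) hsub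
    apply Set.Subsingleton.finite
    rintro β ⟨hβ, n, rfl⟩ β' ⟨hβ', n', rfl⟩
    have hrw : γ + n' • A.δ = (γ + n • A.δ) + (n' - n) • A.δ := by
      rw [sub_smul]; abel
    rw [hrw] at hβ'
    have := A.class_unique lam hirr hβ hβ'
    have : n' = n := by omega
    rw [this]
end

section
/- Let V_ℚ be a finite-dimensional ℚ-vector space, V = ℂ ⊗_ℚ V_ℚ. Let X ⊆ V_ℚ*, let A be a finite index set, and for each a ∈ A let Y_a be a nonempty finite subset of V_ℚ*. Let B_x (x ∈ X) and C_{y,a} (a ∈ A, y ∈ Y_a) be rational numbers. Set Ω = {λ ∈ V : ⟨x, λ⟩ = B_x for all x ∈ X} and Ω′ = {λ ∈ Ω : for every a ∈ A there is y ∈ Y_a with ⟨y, λ⟩ ∉ C_{y,a}ℤ}. If Ω′ ≠ ∅, then Ω′ ∩ V_ℚ ≠ ∅. -/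
open scoped TensorProduct

/-- The canonical pairing `⟨x, λ⟩` between a rational linear functional
`x ∈ V_ℚ*` and a point `λ` of `V = ℂ ⊗_ℚ V_ℚ`, extended `ℂ`-linearly. -/
noncomputable def pairC {V : Type*} [AddCommGroup V] [Module ℚ V]
    (x : Module.Dual ℚ V) (lam : ℂ ⊗[ℚ] V) : ℂ :=
  TensorProduct.lift
    { toFun := fun c : ℂ => c • ((LinearMap.toSpanSingleton ℚ ℂ (1 : ℂ)).comp x)
      map_add' := fun a b => by ext v; simp [add_smul]
      map_smul' := fun q c => by ext v; simp [smul_assoc] } lam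

/-- A linear functional can be chosen nonzero on finitely many nonzero vectors. -/
lemma exists_dual_ne_zero_finset {K : Type*} [Field K] [Infinite K]
    {M : Type*} [AddCommGroup M] [Module K M] {ι : Type*}
    (s : Finset ι) (w : ι → M) (hw : ∀ a ∈ s, w a ≠ 0) :
    ∃ f : M →ₗ[K] K, ∀ a ∈ s, f (w a) ≠ 0 := by
  classical
  induction s using Finset.induction_on with
  | empty => exact ⟨0, by simp⟩
  | @insert a₀ s ha₀ ih =>
    obtain ⟨f, hf⟩ := ih (fun a ha => hw a (Finset.mem_insert_of_mem ha))
    have hwa₀ : w a₀ ≠ 0 := hw a₀ (Finset.mem_insert_self _ _)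
    obtain ⟨g, hg⟩ : ∃ g : M →ₗ[K] K, g (w a₀) ≠ 0 := by
      by_contra h
      push_neg at h
      exact hwa₀ ((Module.forall_dual_apply_eq_zero_iff K (w a₀)).mp h)
    obtain ⟨t, ht⟩ := Infinite.exists_notMem_finset
      ((insert a₀ s).image fun a => -(f (w a)) / g (w a))
    refine ⟨f + t • g, fun a ha => ?_⟩
    simp only [LinearMap.add_apply, LinearMap.smul_apply, smul_eq_mul]
    rcases eq_or_ne (g (w a)) 0 with h0 | h0
    · rw [h0, mul_zero, add_zero]
      rcases Finset.mem_insert.mp ha with rfl | ha'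
      · exact absurd h0 hg
      · exact hf a ha'
    · intro hcontra
      apply ht
      refine Finset.mem_image.mpr ⟨a, ha, ?_⟩
      rw [div_eq_iff h0, neg_eq_iff_add_eq_zero]
      linear_combination hcontra

/-- A ℚ-linear retraction `ℂ → ℚ`. -/
lemma exists_retraction : ∃ c : ℂ →ₗ[ℚ] ℚ, c 1 = 1 := by
  set L := LinearMap.toSpanSingleton ℚ ℂ 1 with hL
  have hinj : Function.Injective L := by
    intro a b hab
    simpa [hL, LinearMap.toSpanSingleton_apply, Rat.smul_def] using hab
  set e := LinearEquiv.ofInjective L hinj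
  obtain ⟨c, hc⟩ := LinearMap.exists_extend (e.symm : LinearMap.range L →ₗ[ℚ] ℚ)
  have h1 : (1 : ℂ) ∈ LinearMap.range L := ⟨1, by simp [hL]⟩
  refine ⟨c, ?_⟩
  have : c ((LinearMap.range L).subtype ⟨1, h1⟩) = e.symm ⟨1, h1⟩ := by
    rw [← LinearMap.comp_apply, hc]; rfl
  have he : e 1 = ⟨1, h1⟩ := by
    ext
    simp [e, hL, LinearEquiv.ofInjective_apply]
  have := this.trans (by rw [← he, LinearEquiv.symm_apply_apply])
  simpa using this

lemma pairC_tmul {V : Type*} [AddCommGroup V] [Module ℚ V]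
    (x : Module.Dual ℚ V) (c : ℂ) (v : V) :
    pairC x (c ⊗ₜ[ℚ] v) = c * ((x v : ℚ) : ℂ) := by
  simp [pairC, TensorProduct.lift.tmul, LinearMap.toSpanSingleton_apply,
    Rat.smul_def, smul_eq_mul]

lemma pairC_add {V : Type*} [AddCommGroup V] [Module ℚ V]
    (x : Module.Dual ℚ V) (l₁ l₂ : ℂ ⊗[ℚ] V) :
    pairC x (l₁ + l₂) = pairC x l₁ + pairC x l₂ := by
  simp only [pairC, map_add]

lemma pairC_bridge {V : Type*} [AddCommGroup V] [Module ℚ V]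
    (φ : ℂ →ₗ[ℚ] ℚ) (x : Module.Dual ℚ V) (lam : ℂ ⊗[ℚ] V) :
    x (TensorProduct.lift ((LinearMap.lsmul ℚ V).comp φ) lam) = φ (pairC x lam) := by
  induction lam using TensorProduct.induction_on with
  | zero => simp [pairC]
  | tmul c v =>
    rw [pairC_tmul]
    have h1 : c * ((x v : ℚ) : ℂ) = (x v) • c := by rw [Rat.smul_def, mul_comm]
    rw [h1, map_smul]
    simp [TensorProduct.lift.tmul, mul_comm, Rat.smul_def, smul_eq_mul]
  | add l₁ l₂ ih₁ ih₂ =>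
    rw [map_add, map_add, ih₁, ih₂, pairC_add, map_add]

lemma den_dvd_cast_mul {u : ℚ} {D : ℕ} (h : u.den ∣ D) : ∃ z : ℤ, (D : ℚ) * u = z := by
  obtain ⟨k, hk⟩ := h
  have hd : ((u.den : ℕ) : ℚ) ≠ 0 := Nat.cast_ne_zero.mpr u.den_nz
  have h1 : u * u.den = u.num := (eq_div_iff hd).mp (Rat.num_div_den u).symm
  refine ⟨k * u.num, ?_⟩
  rw [hk]
  push_cast
  linear_combination (k : ℚ) * h1

/-- Rational points of sets cut out by rational linear
equations and finitely many non-congruence conditions: if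
`Ω = {λ ∈ ℂ ⊗ V_ℚ ; ⟨x,λ⟩ = B_x (x ∈ X)}` and
`Ω' = {λ ∈ Ω ; ∀ a ∈ A, ∃ y ∈ Y_a, ⟨y,λ⟩ ∉ C_{y,a}ℤ}` with `A` finite and each
`Y_a` a nonempty finite set, then `Ω' ≠ ∅` implies `Ω' ∩ V_ℚ ≠ ∅`. -/
theorem statement6 {V : Type*} [AddCommGroup V] [Module ℚ V]
    [FiniteDimensional ℚ V]
    (X : Set (Module.Dual ℚ V)) (A : Type*) [Finite A]
    (Y : A → Finset (Module.Dual ℚ V)) (hY : ∀ a, (Y a).Nonempty)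
    (Bq : Module.Dual ℚ V → ℚ) (C : A → Module.Dual ℚ V → ℚ)
    (Ω : Set (ℂ ⊗[ℚ] V)) (hΩ : Ω = {lam | ∀ x ∈ X, pairC x lam = (Bq x : ℂ)})
    (Ω' : Set (ℂ ⊗[ℚ] V))
    (hΩ' : Ω' = {lam ∈ Ω | ∀ a : A, ∃ y ∈ Y a,
      ¬ ∃ n : ℤ, pairC y lam = (n : ℂ) * (C a y : ℂ)})
    (hne : Ω'.Nonempty) :
    ∃ lam ∈ Ω', ∃ v : V, lam = (1 : ℂ) ⊗ₜ[ℚ] v := by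
  classical
  obtain ⟨lam₀, hlam₀⟩ := hne
  subst hΩ'
  subst hΩ
  obtain ⟨hmem, hcong⟩ := hlam₀
  choose y hyY hy using hcong
  have := Fintype.ofFinite A
  set s : A → ℂ := fun a => pairC (y a) lam₀ with hs
  obtain ⟨c, hc1⟩ := exists_retraction
  have hcq : ∀ r : ℚ, c (r : ℂ) = r := by
    intro r
    have h : ((r : ℂ)) = r • (1 : ℂ) := by rw [Rat.smul_def, mul_one]
    rw [h, map_smul, hc1, smul_eq_mul, mul_one]
  set w : A → ℂ := fun a => s a - ((c (s a) : ℚ) : ℂ) with hw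
  set Bad : Finset A := Finset.univ.filter (fun a => w a ≠ 0) with hBad
  obtain ⟨ψ, hψ⟩ := exists_dual_ne_zero_finset (K := ℚ) Bad w
    (fun a ha => (Finset.mem_filter.mp ha).2)
  set g : A → ℚ := fun a => ψ (w a) with hg
  set q : A → ℚ := fun a => c (s a) with hq
  set D : ℕ := ∏ a : A, ((C a (y a) / g a).den * ((q a) / g a).den) with hD
  have hDpos : 0 < D :=
    Finset.prod_pos (fun a _ => Nat.mul_pos (Rat.den_pos _) (Rat.den_pos _))
  have hDne : ((D : ℕ) : ℚ) ≠ 0 := Nat.cast_ne_zero.mpr hDpos.ne'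
  set t : ℚ := 1 / (2 * D) with ht
  set ψ' : ℂ →ₗ[ℚ] ℚ := ψ - (ψ 1) • c with hψ'
  have hψ'1 : ψ' 1 = 0 := by
    simp [hψ', hc1]
  have hψq : ∀ r : ℚ, ψ ((r : ℂ)) = r * ψ 1 := by
    intro r
    have h : ((r : ℂ)) = r • (1 : ℂ) := by rw [Rat.smul_def, mul_one]
    rw [h, map_smul, smul_eq_mul]
  have hψ's : ∀ a, ψ' (s a) = g a := by
    intro a
    have hga : g a = ψ (s a) - q a * ψ 1 := by
      rw [hg]
      simp only [hw, map_sub, hψq]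
      rfl
    rw [hga, hψ']
    simp [smul_eq_mul, hq, mul_comm]
  set φ : ℂ →ₗ[ℚ] ℚ := c + t • ψ' with hφ
  have hφ1 : φ 1 = 1 := by simp [hφ, hc1, hψ'1]
  have hφq : ∀ r : ℚ, φ ((r : ℂ)) = r := by
    intro r
    have h : ((r : ℂ)) = r • (1 : ℂ) := by rw [Rat.smul_def, mul_one]
    rw [h, map_smul, hφ1, smul_eq_mul, mul_one]
  have hφs : ∀ a, φ (s a) = q a + t * g a := by
    intro a
    simp [hφ, hψ's, hq, smul_eq_mul]
  set Φ := TensorProduct.lift ((LinearMap.lsmul ℚ V).comp φ) with hΦ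
  set v : V := Φ lam₀ with hv
  have hval : ∀ x : Module.Dual ℚ V, x v = φ (pairC x lam₀) :=
    fun x => pairC_bridge φ x lam₀
  refine ⟨(1 : ℂ) ⊗ₜ[ℚ] v, ⟨?_, ?_⟩, v, rfl⟩
  · -- the linear equations
    intro x hx
    rw [pairC_tmul, one_mul]
    have h1 : x v = Bq x := by
      rw [hval x, hmem x hx, hφq]
    exact_mod_cast congrArg (fun r : ℚ => (r : ℂ)) h1
  · -- the non-congruence conditions
    intro a
    refine ⟨y a, hyY a, ?_⟩
    rintro ⟨n, hn⟩
    rw [pairC_tmul, one_mul] at hn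
    have hxv : (y a) v = q a + t * g a := by rw [hval]; exact hφs a
    rw [hxv] at hn
    have hrat : q a + t * g a = (n : ℚ) * C a (y a) := by exact_mod_cast hn
    by_cases hb : a ∈ Bad
    · -- w a ≠ 0, so g a ≠ 0 : contradiction via denominators
      have hg0 : g a ≠ 0 := hψ a hb
      set Cc : ℚ := C a (y a) with hCc
      set u : ℚ := Cc / g a with hu
      set vv : ℚ := q a / g a with hvv
      have hteq : t = (n : ℚ) * u - vv := by
        rw [hu, hvv]
        field_simp
        linear_combination hrat
      obtain ⟨zu, hzu⟩ : ∃ z : ℤ, (D : ℚ) * u = z :=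
        den_dvd_cast_mul (dvd_trans (dvd_mul_right _ _)
          (Finset.dvd_prod_of_mem _ (Finset.mem_univ a)))
      obtain ⟨zv, hzv⟩ : ∃ z : ℤ, (D : ℚ) * vv = z :=
        den_dvd_cast_mul (dvd_trans (dvd_mul_left _ _)
          (Finset.dvd_prod_of_mem _ (Finset.mem_univ a)))
      have hDt : (D : ℚ) * t = 1 / 2 := by
        rw [ht]
        field_simp
      have hhalf : ((n : ℚ) * zu - zv) = 1 / 2 := by
        calc ((n : ℚ) * zu - zv) = (n : ℚ) * ((D : ℚ) * u) - (D : ℚ) * vv := by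
              rw [hzu, hzv]
          _ = (D : ℚ) * t := by rw [hteq]; ring
          _ = 1 / 2 := hDt
      have h2 : (2 * (n * zu - zv) : ℤ) = 1 := by
        have : ((2 * (n * zu - zv) : ℤ) : ℚ) = 1 := by push_cast; linarith
        exact_mod_cast this
      omega
    · -- w a = 0, so s a is rational and the hypothesis applies directly
      have hwa : w a = 0 := by
        by_contra h
        exact hb (Finset.mem_filter.mpr ⟨Finset.mem_univ a, h⟩)
      have hga : g a = 0 := by rw [hg]; simp only [hwa]; exact map_zero ψ
      have hsa : s a = ((q a : ℚ) : ℂ) := by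
        have h0 := sub_eq_zero.mp hwa
        rw [h0, hq]
      apply hy a
      refine ⟨n, ?_⟩
      show s a = (n : ℂ) * ((C a (y a) : ℚ) : ℂ)
      rw [hsa]
      rw [hga, mul_zero, add_zero] at hrat
      rw [hrat]
      push_cast
      ring
end

section
/- Let 𝔤ᵢ = 𝔥 ⊕ 𝔤_{α_i} ⊕ 𝔤_{−α_i} with sl₂-triple (e_i, h_i, f_i), and let a ∈ ℂ \ ℤ. Let M be a 𝔤ᵢ-module that is the direct sum of its weight spaces, with all weights μ satisfying ⟨h_i, μ⟩ ≡ a mod ℤ, and such that every element is annihilated by a power of e_i (i.e. ℂ[e_i]m is finite dimensional for all m). Set M_μ^{e_i} = {m ∈ M_μ : e_i m = 0} and N = ⊕_μ M_μ^{e_i} ⊗ M_i(μ), where M_i(μ) is the 𝔤ᵢ-Verma module with highest weight μ and highest weight vector m_μ. Then the 𝔤ᵢ-linear map φ : N → M defined by φ(m ⊗ f_i^k m_μ) = f_i^k m is an isomorphism. -/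
set_option maxSynthPendingDepth 2

open scoped TensorProduct DirectSum

variable {M : Type*} [AddCommGroup M] [Module ℂ M]

/-- For `m : M` and an endomorphism `F`, the linear map
`(ℕ →₀ ℂ) →ₗ[ℂ] M` sending the basis vector `single k 1` (thought of as
`f_i^k m_μ` in the Verma module `M_i(μ)`) to `F^k m`. -/
noncomputable def vermaToModAux (F : Module.End ℂ M) (m : M) : (ℕ →₀ ℂ) →ₗ[ℂ] M :=
  Finsupp.lsum ℂ fun k => LinearMap.toSpanSingleton ℂ M ((F ^ k) m)

/-- The comparison map `φ : N = ⊕_μ M_μ^{e_i} ⊗ M_i(μ) → M`,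
`φ(m ⊗ f_i^k m_μ) = f_i^k m`, where the Verma module `M_i(μ)` is realized on
`ℕ →₀ ℂ` with `f_i^k m_μ = single k 1`, and `Mker μ = M_μ^{e_i}`. -/
noncomputable def vermaToMod {Λ : Type*} [DecidableEq Λ]
    (Mker : Λ → Submodule ℂ M) (F : Module.End ℂ M) :
    (⨁ μ : Λ, (↥(Mker μ) ⊗[ℂ] (ℕ →₀ ℂ))) →ₗ[ℂ] M :=
  DirectSum.toModule ℂ Λ M fun μ =>
    TensorProduct.lift
      { toFun := fun m : ↥(Mker μ) => vermaToModAux F (m : M)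
        map_add' := fun m m' => by
          unfold vermaToModAux; ext k; simp
        map_smul' := fun c m => by
          unfold vermaToModAux; ext k; simp }

/-- The action of `f_i` on the Verma module `ℕ →₀ ℂ`: `single k 1 ↦ single (k+1) 1`. -/
noncomputable def vermaF : (ℕ →₀ ℂ) →ₗ[ℂ] (ℕ →₀ ℂ) :=
  Finsupp.lmapDomain ℂ ℂ (· + 1)

/-- The action of `f_i` on `N = ⊕_μ M_μ^{e_i} ⊗ M_i(μ)`. -/
noncomputable def bigF {Λ : Type*} [DecidableEq Λ] (Mker : Λ → Submodule ℂ M) :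
    (⨁ μ : Λ, (↥(Mker μ) ⊗[ℂ] (ℕ →₀ ℂ))) →ₗ[ℂ]
      (⨁ μ : Λ, (↥(Mker μ) ⊗[ℂ] (ℕ →₀ ℂ))) :=
  DirectSum.toModule ℂ Λ _ fun μ =>
    (DirectSum.lof ℂ Λ (fun ν => ↥(Mker ν) ⊗[ℂ] (ℕ →₀ ℂ)) μ).comp
      (LinearMap.lTensor ↥(Mker μ) vermaF)

namespace s13

variable {E F H : Module.End ℂ M}

theorem pow_succ_apply (F : Module.End ℂ M) (k : ℕ) (x : M) :
    (F ^ (k+1)) x = F ((F ^ k) x) := by rw [pow_succ', Module.End.mul_apply]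

theorem pow_succ_apply' (F : Module.End ℂ M) (k : ℕ) (x : M) :
    (F ^ (k+1)) x = (F ^ k) (F x) := by rw [pow_succ, Module.End.mul_apply]

theorem HF (hHF : H * F - F * H = (-2 : ℂ) • F) (y : M) :
    H (F y) = F (H y) - (2:ℂ) • (F y) := by
  have := congrArg (fun T : Module.End ℂ M => T y) hHF
  simp only [LinearMap.sub_apply, Module.End.mul_apply, LinearMap.smul_apply] at this
  linear_combination (norm := module) this

theorem HE (hHE : H * E - E * H = (2 : ℂ) • E) (y : M) :
    H (E y) = E (H y) + (2:ℂ) • (E y) := by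
  have := congrArg (fun T : Module.End ℂ M => T y) hHE
  simp only [LinearMap.sub_apply, Module.End.mul_apply, LinearMap.smul_apply] at this
  linear_combination (norm := module) this

theorem EFc (hEF : E * F - F * E = H) (y : M) :
    E (F y) = F (E y) + H y := by
  have := congrArg (fun T : Module.End ℂ M => T y) hEF
  simp only [LinearMap.sub_apply, Module.End.mul_apply] at this
  linear_combination (norm := module) this

theorem HFk (hHF : H * F - F * H = (-2 : ℂ) • F) {x : M} {c : ℂ} (hx : H x = c • x) (k : ℕ) :
    H ((F ^ k) x) = (c - 2 * k) • (F ^ k) x := by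
  induction k with
  | zero => simpa using hx
  | succ k ih =>
    rw [pow_succ_apply, HF hHF, ih, map_smul]
    push_cast
    module

theorem EFk (hEF : E * F - F * E = H) (hHF : H * F - F * H = (-2 : ℂ) • F)
    {x : M} {c : ℂ} (hx : H x = c • x) (hex : E x = 0) (k : ℕ) :
    E ((F ^ k) x) = ((k : ℂ) * (c - k + 1)) • (F ^ (k-1)) x := by
  induction k with
  | zero => simp [hex]
  | succ k ih =>
    rw [pow_succ_apply, EFc hEF, ih, map_smul, HFk hHF hx]
    cases k with
    | zero => simp
    | succ k =>
      simp only [Nat.add_sub_cancel]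
      rw [← pow_succ_apply]
      push_cast
      module

theorem EFk' (hEF : E * F - F * E = H) (hHF : H * F - F * H = (-2 : ℂ) • F)
    {x : M} {c : ℂ} (hx : H x = c • x) (hex : E x = 0) (k : ℕ) :
    E ((F ^ (k+1)) x) = (((k:ℂ)+1) * (c - k)) • (F ^ k) x := by
  rw [EFk hEF hHF hx hex (k+1)]
  simp only [Nat.add_sub_cancel]
  push_cast
  module

theorem kill0 (hEF : E * F - F * E = H) (hHF : H * F - F * H = (-2 : ℂ) • F)
    {x : M} {c : ℂ} (hx : H x = c • x) (hex : E x = 0) (k : ℕ) :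
    (E ^ (k+1)) ((F ^ k) x) = 0 := by
  induction k with
  | zero => simpa using hex
  | succ k ih =>
    rw [pow_succ_apply' E (k+1), EFk' hEF hHF hx hex, map_smul, ih, smul_zero]

theorem kill (hEF : E * F - F * E = H) (hHF : H * F - F * H = (-2 : ℂ) • F)
    {x : M} {c : ℂ} (hx : H x = c • x) (hex : E x = 0) {k n : ℕ} (hk : k < n) :
    (E ^ n) ((F ^ k) x) = 0 := by
  have h : n = (n - (k+1)) + (k+1) := by omega
  rw [h, pow_add, Module.End.mul_apply, kill0 hEF hHF hx hex, map_zero]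

noncomputable def prodc (c : ℂ) (k : ℕ) : ℂ := ∏ j ∈ Finset.range k, (((j:ℂ)+1) * (c - j))

theorem top (hEF : E * F - F * E = H) (hHF : H * F - F * H = (-2 : ℂ) • F)
    {x : M} {c : ℂ} (hx : H x = c • x) (hex : E x = 0) (k : ℕ) :
    (E ^ k) ((F ^ k) x) = prodc c k • x := by
  induction k with
  | zero => simp [prodc]
  | succ k ih =>
    have hp : prodc c (k+1) = (((k:ℂ)+1) * (c - k)) * prodc c k := by
      simp only [prodc]
      rw [Finset.prod_range_succ]
      ring
    rw [pow_succ_apply' E k, EFk' hEF hHF hx hex, map_smul, ih, smul_smul, hp]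

theorem prodc_ne_zero {c : ℂ} (hc : ∀ j : ℕ, c - j ≠ 0) (k : ℕ) : prodc c k ≠ 0 := by
  apply Finset.prod_ne_zero_iff.2
  intro j _
  exact mul_ne_zero (Nat.cast_add_one_ne_zero j) (hc j)

theorem lam_sub_ne {a : ℂ} (ha : ∀ n : ℤ, a ≠ n) {lam : ℂ} (hl : ∃ n : ℤ, lam = a + n)
    (j : ℕ) : lam - j ≠ 0 := by
  obtain ⟨n, rfl⟩ := hl
  intro h
  apply ha ((j : ℤ) - n)
  push_cast
  linear_combination h

theorem distinctZero (H : Module.End ℂ M) (t : Finset ℂ) (y : ℂ → M)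
    (hy : ∀ c ∈ t, y c ∈ Module.End.eigenspace H c)
    (h : ∑ c ∈ t, y c = 0) : ∀ c ∈ t, y c = 0 := by
  intro c0 hc0
  have h2 : y c0 = - ∑ c ∈ t.erase c0, y c := by
    rw [← Finset.add_sum_erase t y hc0] at h
    exact eq_neg_of_add_eq_zero_left h
  have hmem : y c0 ∈ ⨆ (j) (_ : j ≠ c0), Module.End.eigenspace H j := by
    rw [h2]
    refine neg_mem (Submodule.sum_mem _ fun c hc => ?_)
    have hne : c ≠ c0 := Finset.ne_of_mem_erase hc
    exact Submodule.mem_iSup_of_mem c (Submodule.mem_iSup_of_mem hne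
      (hy c (Finset.mem_of_mem_erase hc)))
  have hdisj := (Module.End.eigenspaces_iSupIndep H) c0
  exact Submodule.disjoint_def.mp hdisj _ (hy c0 hc0) hmem

open Classical in
theorem fiberwiseZero {ι : Type*} (H : Module.End ℂ M) (s : Finset ι) (f : ι → M) (g : ι → ℂ)
    (hf : ∀ i ∈ s, f i ∈ Module.End.eigenspace H (g i))
    (h : ∑ i ∈ s, f i = 0) (c : ℂ) :
    ∑ i ∈ s.filter (fun i => g i = c), f i = 0 := by
  classical
  by_cases hc : c ∈ s.image g
  · refine distinctZero H (s.image g) (fun c => ∑ i ∈ s.filter (fun i => g i = c), f i) ?_ ?_ c hc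
    · intro c' _
      refine Submodule.sum_mem _ fun i hi => ?_
      obtain ⟨hi1, hi2⟩ := Finset.mem_filter.mp hi
      rw [← hi2]; exact hf i hi1
    · rw [Finset.sum_fiberwise_of_maps_to (fun i hi => Finset.mem_image_of_mem g hi), h]
  · have : s.filter (fun i => g i = c) = ∅ := by
      apply Finset.filter_eq_empty_iff.mpr
      intro i hi hgi
      exact hc (hgi ▸ Finset.mem_image_of_mem g hi)
    rw [this, Finset.sum_empty]

theorem distinctZero' {ι : Type*} (H : Module.End ℂ M) (s : Finset ι) (f : ι → M) (g : ι → ℂ)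
    (hg : Set.InjOn g s)
    (hf : ∀ i ∈ s, f i ∈ Module.End.eigenspace H (g i))
    (h : ∑ i ∈ s, f i = 0) : ∀ i ∈ s, f i = 0 := by
  classical
  intro i hi
  have h1 := fiberwiseZero H s f g hf h (g i)
  have hfilter : s.filter (fun j => g j = g i) = {i} := by
    apply Finset.eq_singleton_iff_unique_mem.mpr
    exact ⟨Finset.mem_filter.mpr ⟨hi, rfl⟩, fun j hj => by
      obtain ⟨hj1, hj2⟩ := Finset.mem_filter.mp hj
      exact hg hj1 hi hj2⟩
  rw [hfilter, Finset.sum_singleton] at h1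
  exact h1

theorem fiberZero (hEF : E * F - F * E = H) (hHF : H * F - F * H = (-2 : ℂ) • F)
    {ι : Type*} (t : Finset ι) :
    ∀ (kk : ι → ℕ) (x : ι → M) (lam : ι → ℂ),
    (∀ i ∈ t, E (x i) = 0) → (∀ i ∈ t, H (x i) = lam i • x i) →
    (∀ i ∈ t, x i ≠ 0 → ∀ j : ℕ, lam i - j ≠ 0) →
    (∀ i ∈ t, ∀ j ∈ t, kk i = kk j → i = j) →
    ∑ i ∈ t, (F ^ kk i) (x i) = 0 → ∀ i ∈ t, x i = 0 := by
  classical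
  induction t using Finset.strongInduction with
  | _ t IH =>
    intro kk x lam h1 h2 h4 h5 hsum i hi
    have hne : t.Nonempty := ⟨i, hi⟩
    set K := (t.image kk).max' (hne.image kk) with hK
    obtain ⟨i0, hi0t, hk0⟩ : ∃ i0 ∈ t, kk i0 = K := by
      have := (t.image kk).max'_mem (hne.image kk)
      rw [← hK] at this
      exact Finset.mem_image.mp this
    have hKmax : ∀ j ∈ t, kk j ≤ K := fun j hj =>
      Finset.le_max' _ _ (Finset.mem_image_of_mem kk hj)
    have hx0 : x i0 = 0 := by
      by_cases hxx : x i0 = 0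
      · exact hxx
      · exfalso
        have h6 : ∑ j ∈ t, (E ^ K) ((F ^ kk j) (x j)) = 0 := by
          rw [← map_sum, hsum, map_zero]
        have h7 : ∑ j ∈ t, (E ^ K) ((F ^ kk j) (x j)) = prodc (lam i0) K • x i0 := by
          rw [Finset.sum_eq_single i0]
          · rw [hk0, top hEF hHF (h2 i0 hi0t) (h1 i0 hi0t)]
          · intro j hj hji0
            have hlt : kk j < K := by
              rcases lt_or_eq_of_le (hKmax j hj) with h | h
              · exact h
              · exact absurd (h5 j hj i0 hi0t (h.trans hk0.symm)) hji0
            exact kill hEF hHF (h2 j hj) (h1 j hj) hlt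
          · intro h; exact absurd hi0t h
        rw [h7] at h6
        have hp := prodc_ne_zero (h4 i0 hi0t hxx) K
        apply hxx
        have := congrArg (fun y => (prodc (lam i0) K)⁻¹ • y) h6
        simpa [smul_smul, inv_mul_cancel₀ hp] using this
    by_cases hii0 : i = i0
    · rw [hii0]; exact hx0
    · have herase : i ∈ t.erase i0 := Finset.mem_erase.mpr ⟨hii0, hi⟩
      refine IH (t.erase i0) (Finset.erase_ssubset hi0t) kk x lam
        (fun j hj => h1 j (Finset.mem_of_mem_erase hj))
        (fun j hj => h2 j (Finset.mem_of_mem_erase hj))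
        (fun j hj => h4 j (Finset.mem_of_mem_erase hj))
        (fun j hj j' hj' => h5 j (Finset.mem_of_mem_erase hj) j' (Finset.mem_of_mem_erase hj'))
        ?_ i herase
      rw [Finset.sum_erase_eq_sub hi0t, hsum, hx0, map_zero, zero_sub, neg_zero]

section withlof
variable {Λ : Type*} [DecidableEq Λ] (Mker : Λ → Submodule ℂ M) (F : Module.End ℂ M)

theorem vermaToMod_lof_tmul (μ : Λ) (v : ↥(Mker μ)) (x : ℕ →₀ ℂ) :
    vermaToMod Mker F (DirectSum.lof ℂ Λ (fun ν => ↥(Mker ν) ⊗[ℂ] (ℕ →₀ ℂ)) μ (v ⊗ₜ x)) =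
      vermaToModAux F (v : M) x := by
  simp [vermaToMod]

theorem vermaToMod_lof_single (μ : Λ) (v : ↥(Mker μ)) (k : ℕ) (c : ℂ) :
    vermaToMod Mker F (DirectSum.lof ℂ Λ (fun ν => ↥(Mker ν) ⊗[ℂ] (ℕ →₀ ℂ)) μ
      (v ⊗ₜ Finsupp.single k c)) = c • (F ^ k) (v : M) := by
  rw [vermaToMod_lof_tmul]
  simp [vermaToModAux]

theorem intertwine : (vermaToMod Mker F).comp (bigF Mker) = F.comp (vermaToMod Mker F) := by
  refine DirectSum.linearMap_ext _ fun μ => ?_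
  refine TensorProduct.ext ?_
  ext v k
  simp only [LinearMap.comp_apply, LinearMap.compr₂_apply, LinearMap.compr₂ₛₗ_apply, TensorProduct.mk_apply]
  rw [bigF]
  simp only [DirectSum.toModule_lof, LinearMap.comp_apply, LinearMap.lTensor_tmul]
  have hv : vermaF (Finsupp.single k (1:ℂ)) = Finsupp.single (k+1) (1:ℂ) := by
    simp [vermaF, Finsupp.mapDomain_single]
  simp only [Finsupp.lsingle_apply]
  rw [hv, vermaToMod_lof_single, vermaToMod_lof_single]
  simp only [one_smul]
  have h2 : F ((F ^ k) (v:M)) = (F ^ (k+1)) (v:M) := by rw [pow_succ', Module.End.mul_apply]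
  have h3 : (F ^ k) (F (v:M)) = (F ^ (k+1)) (v:M) := by rw [pow_succ, Module.End.mul_apply]
  rw [h2]

theorem mem_range_of_ker (μ : Λ) {v : M} (hv : v ∈ Mker μ) :
    v ∈ LinearMap.range (vermaToMod Mker F) := by
  refine ⟨DirectSum.lof ℂ Λ (fun ν => ↥(Mker ν) ⊗[ℂ] (ℕ →₀ ℂ)) μ
    (⟨v, hv⟩ ⊗ₜ Finsupp.single 0 1), ?_⟩
  rw [vermaToMod_lof_single]
  simp

end withlof
end s13

/-- Let `𝔤ᵢ`-data be given by commuting-relation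
endomorphisms `E, F, H` of `M` (`[E,F] = H`, `[H,E] = 2E`, `[H,F] = -2F`),
with `M` the internal direct sum of its weight spaces `Mw μ` (`H` acting on
`Mw μ` by `⟨h_i, μ⟩ = hpair μ`), all weights congruent to `a ∉ ℤ` mod `ℤ`, and
`E` locally nilpotent.  Then the canonical `𝔤ᵢ`-linear map
`φ : ⊕_μ M_μ^{e_i} ⊗ M_i(μ) → M`, `φ(m ⊗ f_i^k m_μ) = f_i^k m`, is an
isomorphism (it is bijective and intertwines the `f_i`-actions). -/
theorem statement13 {Λ : Type*} [DecidableEq Λ]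
    (hpair : Λ → ℂ)                      -- μ ↦ ⟨h_i, μ⟩
    (Mw : Λ → Submodule ℂ M)             -- weight spaces
    (E F H : Module.End ℂ M)
    (a : ℂ) (ha : ∀ n : ℤ, a ≠ (n : ℂ))
    (hinj : Function.Injective hpair)
    (hEF : E * F - F * E = H)
    (hHE : H * E - E * H = (2 : ℂ) • E)
    (hHF : H * F - F * H = (-2 : ℂ) • F)
    (hdirect : DirectSum.IsInternal Mw)
    (hH : ∀ μ, ∀ m ∈ Mw μ, H m = hpair μ • m)
    (hcong : ∀ μ, Mw μ ≠ ⊥ → ∃ n : ℤ, hpair μ = a + (n : ℂ))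
    (hlocnilp : ∀ m : M, ∃ n : ℕ, (E ^ n) m = 0)
    (Mker : Λ → Submodule ℂ M)
    (hMker : ∀ μ, Mker μ = Mw μ ⊓ LinearMap.ker E) :
    Function.Bijective (vermaToMod Mker F) ∧
    (vermaToMod Mker F).comp (bigF Mker) = F.comp (vermaToMod Mker F) := by
  classical
  set φ := vermaToMod Mker F with hφ
  -- basic membership facts
  have hkerE : ∀ μ, ∀ v ∈ Mker μ, E v = 0 := by
    intro μ v hv
    rw [hMker μ] at hv
    exact hv.2
  have hkerW : ∀ μ, ∀ v ∈ Mker μ, v ∈ Mw μ := by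
    intro μ v hv
    rw [hMker μ] at hv
    exact hv.1
  have hHker : ∀ μ, ∀ v ∈ Mker μ, H v = hpair μ • v := fun μ v hv => hH μ v (hkerW μ v hv)
  have hnonint : ∀ μ, ∀ v : M, v ∈ Mw μ → v ≠ 0 → ∀ j : ℕ, hpair μ - j ≠ 0 := by
    intro μ v hv hvne j
    refine s13.lam_sub_ne ha (hcong μ ?_) j
    intro hbot
    rw [hbot] at hv
    exact hvne (Submodule.mem_bot ℂ |>.mp hv)
  -- surjectivity ingredients
  -- (b) range ≤ map E range
  have hmapE : ∀ ξ, φ ξ ∈ Submodule.map E (LinearMap.range φ) := by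
    intro ξ
    induction ξ using DirectSum.induction_on with
    | zero => simp
    | add ξ₁ ξ₂ ih1 ih2 => rw [map_add]; exact add_mem ih1 ih2
    | of μ t =>
      rw [← DirectSum.lof_eq_of ℂ]
      induction t using TensorProduct.induction_on with
      | zero => simp
      | add t1 t2 ih1 ih2 => rw [map_add, map_add]; exact add_mem ih1 ih2
      | tmul v x =>
        induction x using Finsupp.induction with
        | zero => simp [TensorProduct.tmul_zero]
        | single_add k c f hk hc ihf =>
          rw [TensorProduct.tmul_add, map_add, map_add]
          refine add_mem ?_ ihf
          rw [s13.vermaToMod_lof_single]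
          by_cases hv : (v : M) = 0
          · simp [hv]
          · have hvW : (v : M) ∈ Mw μ := hkerW μ v v.2
            have hne := hnonint μ v hvW hv
            set sc : ℂ := (((k:ℂ)+1) * (hpair μ - k))⁻¹ with hsc
            refine ⟨φ (DirectSum.lof ℂ Λ (fun ν => ↥(Mker ν) ⊗[ℂ] (ℕ →₀ ℂ)) μ
              (((c * sc) • v) ⊗ₜ Finsupp.single (k+1) 1)), LinearMap.mem_range_self _ _, ?_⟩
            rw [hφ, s13.vermaToMod_lof_single]
            simp only [one_smul, Submodule.coe_smul, map_smul]
            rw [s13.EFk' hEF hHF (hHker μ v v.2) (hkerE μ v v.2)]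
            rw [smul_smul, hsc]
            have hne2 : ((k:ℂ)+1) * (hpair μ - k) ≠ 0 :=
              mul_ne_zero (Nat.cast_add_one_ne_zero k) (hne k)
            rw [mul_assoc, inv_mul_cancel₀ hne2, mul_one]
  -- (c) ker E ≤ range φ
  have hkerle : ∀ x : M, E x = 0 → x ∈ LinearMap.range φ := by
    intro x hx
    set e := LinearEquiv.ofBijective (DirectSum.coeLinearMap Mw) hdirect with he
    set w := e.symm x with hw
    have hwx : DirectSum.coeLinearMap Mw w = x := e.apply_symm_apply x
    have hsum : ∑ μ ∈ DFinsupp.support w, ((w μ : M)) = x := by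
      have h1 := DirectSum.sum_support_of w
      have h2 := congrArg (DirectSum.coeLinearMap Mw) h1
      rw [map_sum] at h2
      simpa only [DirectSum.coeLinearMap_of, hwx] using h2
    have hEsum : ∑ μ ∈ DFinsupp.support w, E ((w μ : M)) = 0 := by
      rw [← map_sum, hsum, hx]
    have hEzero : ∀ μ ∈ DFinsupp.support w, E ((w μ : M)) = 0 := by
      refine s13.distinctZero' H _ _ (fun μ => hpair μ + 2) ?_ ?_ hEsum
      · intro μ _ ν _ hμν
        exact hinj (by linear_combination hμν)
      · intro μ _
        rw [Module.End.mem_eigenspace_iff]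
        have h1 : H ((w μ : M)) = hpair μ • (w μ : M) := hH μ _ (w μ).2
        have h2 := s13.HE hHE (w μ : M)
        rw [h1, map_smul] at h2
        rw [h2]
        module
    rw [← hsum]
    refine Submodule.sum_mem _ fun μ hμ => ?_
    refine s13.mem_range_of_ker Mker F μ ?_
    rw [hMker μ]
    exact ⟨(w μ).2, hEzero μ hμ⟩
  -- (d) surjectivity
  have hsurj : Function.Surjective φ := by
    have key : ∀ n (m : M), (E ^ n) m = 0 → m ∈ LinearMap.range φ := by
      intro n
      induction n with
      | zero =>
        intro m hm
        rw [pow_zero, Module.End.one_apply] at hm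
        rw [hm]
        exact zero_mem _
      | succ n ih =>
        intro m hm
        have h1 : (E ^ n) (E m) = 0 := by
          rw [← Module.End.mul_apply, ← pow_succ]
          exact hm
        obtain ⟨ξ, hξ⟩ := ih (E m) h1
        have h3 : E m ∈ Submodule.map E (LinearMap.range φ) := hξ ▸ hmapE ξ
        obtain ⟨y, hy, hEy⟩ := h3
        have h4 : m - y ∈ LinearMap.range φ := by
          refine hkerle _ ?_
          rw [map_sub, hEy, sub_self]
        simpa using add_mem h4 hy
    intro m
    obtain ⟨n, hn⟩ := hlocnilp m
    obtain ⟨ξ, hξ⟩ := key n m hn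
    exact ⟨ξ, hξ⟩
  -- injectivity
  have hinj0 : ∀ ξ, φ ξ = 0 → ξ = 0 := by
    intro ξ hξ0
    set T : ∀ μ : Λ, (↥(Mker μ) ⊗[ℂ] (ℕ →₀ ℂ)) ≃ₗ[ℂ] (ℕ →₀ ↥(Mker μ)) :=
      fun μ => TensorProduct.finsuppScalarRight ℂ ℂ ↥(Mker μ) ℕ with hT
    -- φ on a lof in terms of T
    have hphiT : ∀ (μ : Λ) (t : ↥(Mker μ) ⊗[ℂ] (ℕ →₀ ℂ)),
        φ (DirectSum.lof ℂ Λ (fun ν => ↥(Mker ν) ⊗[ℂ] (ℕ →₀ ℂ)) μ t) =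
          ((T μ) t).sum fun k v => (F ^ k) (v : M) := by
      intro μ t
      have hmaps : φ.comp (DirectSum.lof ℂ Λ (fun ν => ↥(Mker ν) ⊗[ℂ] (ℕ →₀ ℂ)) μ) =
          (Finsupp.lsum ℂ fun k => (F ^ k).comp (Mker μ).subtype).comp (T μ).toLinearMap := by
        refine TensorProduct.ext ?_
        ext v k
        simp only [LinearMap.comp_apply, LinearMap.compr₂_apply, LinearMap.compr₂ₛₗ_apply, TensorProduct.mk_apply,
          Finsupp.lsingle_apply, LinearEquiv.coe_coe]
        rw [hφ, s13.vermaToMod_lof_single]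
        rw [hT]
        rw [TensorProduct.finsuppScalarRight_apply_tmul]
        simp
      have := congrArg (fun (f : (↥(Mker μ) ⊗[ℂ] (ℕ →₀ ℂ)) →ₗ[ℂ] M) => f t) hmaps
      simpa [Function.comp_def] using this
    have hsum0 : ∑ μ ∈ DFinsupp.support ξ,
        ((T μ) (ξ μ)).sum (fun k v => (F ^ k) (v : M)) = 0 := by
      have h1 := DirectSum.sum_support_of ξ
      have h2 := congrArg φ h1
      rw [map_sum] at h2
      rw [hξ0] at h2
      rw [← h2]
      refine Finset.sum_congr rfl fun μ _ => ?_
      rw [← DirectSum.lof_eq_of ℂ, hphiT]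
    -- flatten to a sigma finset
    set s : Finset ((_ : Λ) × ℕ) :=
      (DFinsupp.support ξ).sigma (fun μ => ((T μ) (ξ μ)).support) with hs
    have hflat : ∑ i ∈ s, (F ^ i.2) (((T i.1) (ξ i.1)) i.2 : M) = 0 := by
      rw [hs, Finset.sum_sigma]
      exact hsum0
    have hall : ∀ i ∈ s, (((T i.1) (ξ i.1)) i.2 : M) = 0 := by
      set xx : ((_ : Λ) × ℕ) → M := fun i => (((T i.1) (ξ i.1)) i.2 : M) with hxx
      have hmemMker : ∀ j : ((_ : Λ) × ℕ), xx j ∈ Mker j.1 := fun j => (((T j.1) (ξ j.1)) j.2).2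
      have heig : ∀ j ∈ s, (F ^ j.2) (xx j) ∈
          Module.End.eigenspace H (hpair j.1 - 2 * j.2) := by
        intro j _
        rw [Module.End.mem_eigenspace_iff]
        exact s13.HFk hHF (hHker j.1 _ (hmemMker j)) j.2
      intro i hi
      have hfib := s13.fiberwiseZero H s (fun j => (F ^ j.2) (xx j))
        (fun j => hpair j.1 - 2 * j.2) heig hflat (hpair i.1 - 2 * i.2)
      refine s13.fiberZero hEF hHF
        (s.filter (fun j => hpair j.1 - 2 * (j.2:ℂ) = hpair i.1 - 2 * i.2))
        (fun j => j.2) xx (fun j => hpair j.1)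
        (fun j _ => hkerE j.1 _ (hmemMker j))
        (fun j _ => hHker j.1 _ (hmemMker j))
        (fun j _ hne => hnonint j.1 _ (hkerW j.1 _ (hmemMker j)) hne)
        ?_ hfib i (Finset.mem_filter.mpr ⟨hi, rfl⟩)
      intro j hj j' hj' hkk
      obtain ⟨_, hgj⟩ := Finset.mem_filter.mp hj
      obtain ⟨_, hgj'⟩ := Finset.mem_filter.mp hj'
      obtain ⟨μ1, k1⟩ := j
      obtain ⟨μ2, k2⟩ := j'
      simp only at hkk hgj hgj'
      subst hkk
      have hμ12 : μ1 = μ2 := by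
        apply hinj
        linear_combination hgj - hgj'
      subst hμ12
      rfl
    -- conclude ξ = 0
    refine DFinsupp.support_eq_empty.mp ?_
    refine Finset.eq_empty_iff_forall_notMem.mpr fun μ hμ => ?_
    refine DFinsupp.mem_support_iff.mp hμ ?_
    have hT0 : (T μ) (ξ μ) = 0 := by
      ext k
      by_cases hk : k ∈ ((T μ) (ξ μ)).support
      · have h0 := hall ⟨μ, k⟩ (Finset.mem_sigma.mpr ⟨hμ, hk⟩)
        simpa using Submodule.coe_eq_zero.mp h0
      · simpa using Finsupp.notMem_support_iff.mp hk
    exact (LinearEquiv.map_eq_zero_iff (T μ)).mp hT0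
  have hinjφ : Function.Injective φ := by
    intro x y hxy
    have h0 := hinj0 (x - y) (by rw [map_sub, hxy, sub_self])
    exact sub_eq_zero.mp h0
  exact ⟨⟨hinjφ, hsurj⟩, s13.intertwine Mker F⟩
end
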